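/- arXiv:2105.12575 — 2 statements merged into one kernel-verified Lean document; each statement's English description precedes it below -/
import Mathlib

section
/- Assume v_0 < ... < v_g satisfy the Bresinsky conditions. Then the Apéry set of Γ\{0} is Ap(Γ\{0}) = {v_0} ∪ ({Σ_{i=1}^g s_i v_i : 0 ≤ s_i < n_i} \ {0}), it has exactly v_0 elements, and Γ\{0} is covered by its Apéry set, i.e. Γ\{0} = ⋃_{a ∈ Ap(Γ\{0})} (a + ℕ·v_0). -/
/-- The Apéry set of `S ⊆ ℕ` (w.r.t. `a₀ = min S`): the minimal element of `S`
in each residue class modulo `a₀` that meets `S`. -/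
noncomputable def apery (S : Set ℕ) : Set ℕ :=
  {a | a ∈ S ∧ ∀ b ∈ S, b % sInf S = a % sInf S → a ≤ b}

/-- `S` is covered by its Apéry set: `Ap(S)` has exactly `min S` elements and
`S = ⋃_{a ∈ Ap(S)} (a + ℕ·min S)`. -/
noncomputable def CoveredByApery (S : Set ℕ) : Prop :=
  (apery S).ncard = sInf S ∧
    S = {x | ∃ a ∈ apery S, ∃ k : ℕ, x = a + k * sInf S}

/-- The sequence `ε_i` computed from `S`:
`ε_0 = min S`, `ε_i = max{gcd(ε_{i-1}, a) : a ∈ Ap(S), ε_{i-1} ∤ a}`. -/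
noncomputable def eps (S : Set ℕ) : ℕ → ℕ
  | 0 => sInf S
  | i + 1 => sSup {d | ∃ a ∈ apery S, ¬ eps S i ∣ a ∧ d = Nat.gcd (eps S i) a}

/-- `η_0 = 1`, `η_i = ε_{i-1}/ε_i`. -/
noncomputable def eta (S : Set ℕ) : ℕ → ℕ
  | 0 => 1
  | i + 1 => eps S i / eps S (i + 1)

/-- The minimal index `ρ` with `ε_ρ = 1`. -/
noncomputable def rho (S : Set ℕ) : ℕ := sInf {i | eps S i = 1}

/-- The set of the `m` smallest elements of `T ⊆ ℕ`. -/
noncomputable def nSmallest (m : ℕ) (T : Set ℕ) : Set ℕ :=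
  {a | a ∈ T ∧ (T ∩ Set.Iio a).ncard < m}

/-- The sets `B_i(S)`: `B_0(S) = {min S}`, and for `i ≥ 1`, `B_i(S)` is the set of
the `ε_0/ε_{i-1}` smallest elements of `{a ∈ Ap(S) : ε_i ∣ a, ε_{i-1} ∤ a}`. -/
noncomputable def Bset (S : Set ℕ) : ℕ → Set ℕ
  | 0 => {sInf S}
  | i + 1 => nSmallest (eps S 0 / eps S i)
      {a | a ∈ apery S ∧ eps S (i + 1) ∣ a ∧ ¬ eps S i ∣ a}

/-- `e_i = gcd(v_0, …, v_i)`. -/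
def eseq (v : ℕ → ℕ) : ℕ → ℕ
  | 0 => v 0
  | i + 1 => Nat.gcd (eseq v i) (v (i + 1))

/-- `n_0 = 1`, `n_i = e_{i-1}/e_i`. -/
def nseq (v : ℕ → ℕ) : ℕ → ℕ
  | 0 => 1
  | i + 1 => eseq v i / eseq v (i + 1)

/-- The numerical semigroup generated by `v_0, …, v_g`. -/
def semigroupGen (g : ℕ) (v : ℕ → ℕ) : Set ℕ :=
  {x | ∃ c : ℕ → ℕ, x = ∑ i ∈ Finset.range (g + 1), c i * v i}

section Aux

variable (v : ℕ → ℕ)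

lemma eseq_pos (hpos : 0 < v 0) : ∀ i, 0 < eseq v i
  | 0 => hpos
  | i + 1 => Nat.gcd_pos_of_pos_left _ (eseq_pos hpos i)

lemma eseq_succ_dvd (i : ℕ) : eseq v (i + 1) ∣ eseq v i := Nat.gcd_dvd_left _ _

lemma eseq_dvd_v {j i : ℕ} (h : j ≤ i) : eseq v i ∣ v j := by
  induction i with
  | zero => simp [Nat.le_zero.mp h, eseq]
  | succ k ih =>
    rcases Nat.lt_or_ge j (k+1) with h'|h'
    · exact (Nat.gcd_dvd_left _ _).trans (ih (Nat.lt_succ_iff.mp h'))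
    · have : j = k + 1 := le_antisymm h h'
      rw [this]; exact Nat.gcd_dvd_right _ _

lemma nseq_mul_eseq (hpos : 0 < v 0) (i : ℕ) :
    nseq v (i + 1) * eseq v (i + 1) = eseq v i :=
  Nat.div_mul_cancel (eseq_succ_dvd v i)

lemma nseq_pos (hpos : 0 < v 0) (i : ℕ) : 0 < nseq v i := by
  cases i with
  | zero => norm_num [nseq]
  | succ k =>
    exact Nat.div_pos (Nat.le_of_dvd (eseq_pos v hpos k) (eseq_succ_dvd v k))
      (eseq_pos v hpos (k+1))

lemma coprime_nseq (hpos : 0 < v 0) (i : ℕ) :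
    Nat.Coprime (nseq v (i+1)) (v (i+1) / eseq v (i+1)) := by
  have h : eseq v (i+1) = Nat.gcd (eseq v i) (v (i+1)) := rfl
  have hg : 0 < Nat.gcd (eseq v i) (v (i+1)) := h ▸ eseq_pos v hpos (i+1)
  simpa [nseq, h] using Nat.coprime_div_gcd_div_gcd (m := eseq v i) (n := v (i+1)) hg

lemma sg_zero (g : ℕ) : 0 ∈ semigroupGen g v := ⟨fun _ => 0, by simp⟩

lemma sg_add {g x y : ℕ} (hx : x ∈ semigroupGen g v) (hy : y ∈ semigroupGen g v) :
    x + y ∈ semigroupGen g v := by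
  obtain ⟨c, hc⟩ := hx; obtain ⟨d, hd⟩ := hy
  exact ⟨fun i => c i + d i, by simp [hc, hd, add_mul, Finset.sum_add_distrib]⟩

lemma sg_gen {g j : ℕ} (h : j ≤ g) : v j ∈ semigroupGen g v := by
  refine ⟨fun i => if i = j then 1 else 0, ?_⟩
  rw [Finset.sum_eq_single j] <;>
    simp (config := {contextual := true}) [Finset.mem_range, Nat.lt_succ_iff, h]

lemma sg_nsmul {g x : ℕ} (k : ℕ) (hx : x ∈ semigroupGen g v) : k * x ∈ semigroupGen g v := by
  induction k with
  | zero => simpa using sg_zero v g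
  | succ n ih => rw [Nat.succ_mul]; exact sg_add v ih hx

lemma sg_succ_iff {g x : ℕ} :
    x ∈ semigroupGen (g+1) v ↔ ∃ y ∈ semigroupGen g v, ∃ r, x = y + r * v (g+1) := by
  constructor
  · rintro ⟨c, rfl⟩
    exact ⟨∑ i ∈ Finset.range (g+1), c i * v i, ⟨c, rfl⟩, c (g+1),
      by rw [Finset.sum_range_succ]⟩
  · rintro ⟨y, ⟨c, rfl⟩, r, rfl⟩
    refine ⟨fun i => if i ≤ g then c i else r, ?_⟩
    rw [Finset.sum_range_succ (f := fun i => (if i ≤ g then c i else r) * v i) (n := g+1)]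
    have h1 : ∑ i ∈ Finset.range (g+1), (if i ≤ g then c i else r) * v i
        = ∑ i ∈ Finset.range (g+1), c i * v i :=
      Finset.sum_congr rfl (fun i hi => by
        simp [Nat.lt_succ_iff.mp (Finset.mem_range.mp hi)])
    rw [h1]
    simp

lemma eseq_dvd_sg {g x : ℕ} (hx : x ∈ semigroupGen g v) : eseq v g ∣ x := by
  obtain ⟨c, rfl⟩ := hx
  exact Finset.dvd_sum fun i hi =>
    Dvd.dvd.mul_left (eseq_dvd_v v (Nat.lt_succ_iff.mp (Finset.mem_range.mp hi))) _

lemma sum_Icc_mem_sg (g : ℕ) (s : ℕ → ℕ) :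
    (∑ i ∈ Finset.Icc 1 g, s i * v i) ∈ semigroupGen g v := by
  refine ⟨fun i => if i = 0 then 0 else s i, ?_⟩
  rw [Finset.range_eq_Ico, Finset.sum_eq_sum_Ico_succ_bot (Nat.succ_pos g)]
  simp only [if_true, ite_true]
  rw [zero_mul, zero_add, show (0+1 : ℕ) = 1 from rfl, Nat.succ_eq_add_one,
    Finset.Ico_add_one_right_eq_Icc]
  refine Finset.sum_congr rfl fun i hi => ?_
  have : i ≠ 0 := by have := (Finset.mem_Icc.mp hi).1; omega
  simp [this]

lemma sum_Icc_top {M : Type*} [AddCommMonoid M] (f : ℕ → M) (a b : ℕ) (h : a ≤ b + 1) :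
    ∑ j ∈ Finset.Icc a (b+1), f j = (∑ j ∈ Finset.Icc a b, f j) + f (b+1) := by
  rw [← Finset.insert_Icc_right_eq_Icc_add_one h, Finset.sum_insert (by simp), add_comm]

lemma exists_r (n u : ℕ) (hn : 0 < n) (h : Nat.Coprime n u) (m' : ℤ) :
    ∃ r : ℕ, r < n ∧ (n:ℤ) ∣ m' - r * u := by
  have hco : IsCoprime (u : ℤ) (n : ℤ) := by
    rw [Int.isCoprime_iff_gcd_eq_one]
    simpa [Int.gcd_natCast_natCast] using (Nat.coprime_comm.mp h)
  obtain ⟨a, b, hab⟩ := hco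
  set r : ℤ := (m' * a) % n with hr
  have hrnn : 0 ≤ r := Int.emod_nonneg _ (by exact_mod_cast hn.ne')
  have hrlt : r < n := Int.emod_lt_of_pos _ (by exact_mod_cast hn)
  refine ⟨r.toNat, by omega, ?_⟩
  have h1 : (n:ℤ) ∣ m' * a - r := Int.dvd_self_sub_of_emod_eq rfl
  obtain ⟨c, hc⟩ := h1
  have key : m' - (r.toNat : ℤ) * u = m' * (b * n) + c * n * u := by
    have h2 : (r.toNat : ℤ) = r := Int.toNat_of_nonneg hrnn
    rw [h2]
    have hru : r = m' * a - n * c := by omega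
    rw [hru]
    linear_combination (-m') * hab
  rw [key]
  exact dvd_add ⟨m' * b, by ring⟩ ⟨c * u, by ring⟩

variable (g : ℕ)

lemma bres_conductor (hpos : 0 < v 0)
    (hbre : ∀ i, 1 ≤ i → i ≤ g → 2 ≤ nseq v i ∧ nseq v (i - 1) * v (i - 1) < v i) :
    ∀ i, i ≤ g → ∀ m : ℤ, (eseq v i : ℤ) ∣ m →
      (∑ j ∈ Finset.Icc 1 i, ((nseq v j : ℤ) - 1) * v j) - v 0 < m →
      ∃ x ∈ semigroupGen i v, (x : ℤ) = m := by
  intro i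
  induction i with
  | zero =>
    intro _ m hdvd hlt
    rw [show Finset.Icc 1 0 = (∅ : Finset ℕ) from rfl] at hlt
    simp only [Finset.sum_empty, zero_sub] at hlt
    obtain ⟨t, rfl⟩ := hdvd
    have hv0 : (0:ℤ) < (v 0 : ℤ) := by exact_mod_cast hpos
    have he0 : (eseq v 0 : ℤ) = (v 0 : ℤ) := rfl
    rw [he0] at hlt ⊢
    have ht : 0 ≤ t := by nlinarith
    refine ⟨t.toNat * v 0, ⟨fun _ => t.toNat, by simp [Finset.sum_range_one]⟩, ?_⟩
    push_cast [Int.toNat_of_nonneg ht]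
    ring
  | succ k ih =>
    intro hk m hdvd hlt
    have hk' : k ≤ g := Nat.le_of_succ_le hk
    have hn2 : 2 ≤ nseq v (k+1) := (hbre (k+1) (by omega) hk).1
    have he'pos : 0 < eseq v (k+1) := eseq_pos v hpos (k+1)
    have hvdvd : eseq v (k+1) ∣ v (k+1) := eseq_dvd_v v (le_refl (k+1))
    have huv : v (k+1) = eseq v (k+1) * (v (k+1) / eseq v (k+1)) :=
      (Nat.mul_div_cancel' hvdvd).symm
    have hne : nseq v (k+1) * eseq v (k+1) = eseq v k := nseq_mul_eseq v hpos k
    have hco : Nat.Coprime (nseq v (k+1)) (v (k+1) / eseq v (k+1)) := coprime_nseq v hpos k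
    obtain ⟨m', rfl⟩ := hdvd
    obtain ⟨r, hr, hdvd2⟩ := exists_r (nseq v (k+1)) (v (k+1) / eseq v (k+1)) (by omega) hco m'
    obtain ⟨t, ht⟩ := hdvd2
    have huvZ : (v (k+1) : ℤ) = (eseq v (k+1) : ℤ) * ((v (k+1) / eseq v (k+1) : ℕ) : ℤ) := by
      exact_mod_cast (Nat.mul_div_cancel' hvdvd).symm
    have hneZ : (nseq v (k+1) : ℤ) * (eseq v (k+1) : ℤ) = (eseq v k : ℤ) := by
      exact_mod_cast hne
    have key : (eseq v (k+1) : ℤ) * m' - r * v (k+1) = (eseq v k : ℤ) * t := by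
      rw [huvZ, ← hneZ]
      linear_combination (eseq v (k+1) : ℤ) * ht
    have hlt2 : (∑ j ∈ Finset.Icc 1 k, ((nseq v j : ℤ) - 1) * v j) - v 0
        < (eseq v (k+1) : ℤ) * m' - r * v (k+1) := by
      rw [sum_Icc_top _ 1 k (by omega)] at hlt
      have h1 : (r : ℤ) * v (k+1) ≤ ((nseq v (k+1) : ℤ) - 1) * v (k+1) := by
        have h2 : (r:ℤ) ≤ (nseq v (k+1) : ℤ) - 1 := by omega
        have h3 : (0:ℤ) ≤ v (k+1) := by positivity
        exact mul_le_mul_of_nonneg_right h2 h3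
      linarith
    obtain ⟨x, hx, hxm⟩ := ih hk' _ ⟨t, key⟩ hlt2
    refine ⟨x + r * v (k+1), (sg_succ_iff v).mpr ⟨x, hx, r, rfl⟩, ?_⟩
    push_cast
    rw [hxm]
    ring

lemma bres_sum_lt (hpos : 0 < v 0)
    (hbre : ∀ i, 1 ≤ i → i ≤ g → 2 ≤ nseq v i ∧ nseq v (i - 1) * v (i - 1) < v i) :
    ∀ k, k ≤ g → (∑ j ∈ Finset.Icc 1 k, ((nseq v j : ℤ) - 1) * v j) < (nseq v k : ℤ) * v k := by
  intro k
  induction k with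
  | zero =>
    intro _
    rw [show Finset.Icc 1 0 = (∅ : Finset ℕ) from rfl]
    simp only [Finset.sum_empty, nseq, Nat.cast_one, one_mul]
    exact_mod_cast hpos
  | succ i ih =>
    intro h
    rw [sum_Icc_top _ 1 i (by omega)]
    have h1 := ih (by omega)
    have h2 := (hbre (i+1) (by omega) h).2
    simp only [Nat.add_sub_cancel] at h2
    have h3 : (nseq v i : ℤ) * v i < v (i+1) := by exact_mod_cast h2
    have h4 : (1:ℤ) ≤ (nseq v (i+1) : ℤ) := by
      have := nseq_pos v hpos (i+1); exact_mod_cast this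
    nlinarith [show (0:ℤ) ≤ (v (i+1) : ℤ) by positivity]

lemma bres_nv_mem (hpos : 0 < v 0)
    (hbre : ∀ i, 1 ≤ i → i ≤ g → 2 ≤ nseq v i ∧ nseq v (i - 1) * v (i - 1) < v i) (i : ℕ) (h1 : 1 ≤ i) (hg : i ≤ g) :
    nseq v i * v i ∈ semigroupGen (i-1) v := by
  obtain ⟨k, rfl⟩ : ∃ k, i = k + 1 := ⟨i - 1, by omega⟩
  simp only [Nat.add_sub_cancel]
  have hvdvd : eseq v (k+1) ∣ v (k+1) := eseq_dvd_v v (le_refl (k+1))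
  have hdvd : (eseq v k : ℤ) ∣ ((nseq v (k+1) * v (k+1) : ℕ) : ℤ) := by
    have hnat : nseq v (k+1) * v (k+1) = eseq v k * (v (k+1) / eseq v (k+1)) := by
      rw [← nseq_mul_eseq v hpos k, mul_assoc, Nat.mul_div_cancel' hvdvd]
    exact_mod_cast (hnat ▸ Dvd.intro _ rfl : eseq v k ∣ nseq v (k+1) * v (k+1))
  have hlt : (∑ j ∈ Finset.Icc 1 k, ((nseq v j : ℤ) - 1) * v j) - v 0
      < ((nseq v (k+1) * v (k+1) : ℕ) : ℤ) := by
    have h1 := bres_sum_lt v g hpos hbre k (by omega)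
    have h2 := (hbre (k+1) (by omega) hg).2
    simp only [Nat.add_sub_cancel] at h2
    have h3 : (nseq v k : ℤ) * v k < v (k+1) := by exact_mod_cast h2
    have h4 : (1:ℤ) ≤ (nseq v (k+1) : ℤ) := by
      have := nseq_pos v hpos (k+1); exact_mod_cast this
    have h5 : (0:ℤ) < (v 0 : ℤ) := by exact_mod_cast hpos
    have h6 : (v (k+1) : ℤ) ≤ (nseq v (k+1) : ℤ) * v (k+1) := by
      nlinarith [show (0:ℤ) ≤ (v (k+1) : ℤ) by positivity]
    push_cast
    push_cast at h6
    nlinarith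
  obtain ⟨x, hx, hxm⟩ := bres_conductor v g hpos hbre k (by omega) _ hdvd hlt
  have : x = nseq v (k+1) * v (k+1) := by exact_mod_cast hxm
  exact this ▸ hx

lemma bres_red (hpos : 0 < v 0)
    (hbre : ∀ i, 1 ≤ i → i ≤ g → 2 ≤ nseq v i ∧ nseq v (i - 1) * v (i - 1) < v i) :
    ∀ i, i ≤ g → ∀ x ∈ semigroupGen i v,
      ∃ s : ℕ → ℕ, (∀ j, 1 ≤ j → j ≤ i → s j < nseq v j) ∧
        ∃ k, x = k * v 0 + ∑ j ∈ Finset.Icc 1 i, s j * v j := by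
  intro i
  induction i with
  | zero =>
    intro _ x hx
    obtain ⟨c, rfl⟩ := hx
    refine ⟨fun _ => 0, by omega, c 0, ?_⟩
    rw [show Finset.Icc 1 0 = (∅ : Finset ℕ) from rfl]
    simp [Finset.sum_range_one]
  | succ i ih =>
    intro h x hx
    obtain ⟨y, hy, c, rfl⟩ := (sg_succ_iff v).mp hx
    have hn : 0 < nseq v (i+1) := nseq_pos v hpos (i+1)
    have hc : c = nseq v (i+1) * (c / nseq v (i+1)) + c % nseq v (i+1) :=
      (Nat.div_add_mod c (nseq v (i+1))).symm
    have hmem : y + (c / nseq v (i+1)) * (nseq v (i+1) * v (i+1)) ∈ semigroupGen i v := by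
      refine sg_add v hy (sg_nsmul v _ ?_)
      have := bres_nv_mem v g hpos hbre (i+1) (by omega) h
      simpa using this
    obtain ⟨s, hs, k, hk⟩ := ih (by omega) _ hmem
    refine ⟨Function.update s (i+1) (c % nseq v (i+1)), ?_, k, ?_⟩
    · intro j h1 h2
      by_cases hj : j = i + 1
      · subst hj
        rw [Function.update_self]
        exact Nat.mod_lt _ hn
      · rw [Function.update_of_ne hj]
        exact hs j h1 (by omega)
    · rw [sum_Icc_top _ 1 i (by omega), Function.update_self]
      have hss : ∑ j ∈ Finset.Icc 1 i, Function.update s (i+1) (c % nseq v (i+1)) j * v j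
          = ∑ j ∈ Finset.Icc 1 i, s j * v j :=
        Finset.sum_congr rfl fun j hj => by
          rw [Function.update_of_ne (by have := (Finset.mem_Icc.mp hj).2; omega)]
      rw [hss]
      have step : y + c * v (i+1)
          = (y + (c / nseq v (i+1)) * (nseq v (i+1) * v (i+1))) + (c % nseq v (i+1)) * v (i+1) := by
        nth_rewrite 1 [hc]
        ring
      rw [step, hk]
      ring

lemma bres_inj (hpos : 0 < v 0) :
    ∀ i, i ≤ g → ∀ s t : ℕ → ℕ,
      (∀ j, 1 ≤ j → j ≤ i → s j < nseq v j) → (∀ j, 1 ≤ j → j ≤ i → t j < nseq v j) →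
      ((v 0 : ℤ) ∣ (∑ j ∈ Finset.Icc 1 i, (s j : ℤ) * v j)
        - ∑ j ∈ Finset.Icc 1 i, (t j : ℤ) * v j) →
      ∀ j, 1 ≤ j → j ≤ i → s j = t j := by
  intro i
  induction i with
  | zero => intro _ s t _ _ _ j h1 h2; omega
  | succ i ih =>
    intro h s t hs ht hdvd
    rw [sum_Icc_top _ 1 i (by omega), sum_Icc_top _ 1 i (by omega)] at hdvd
    have hei_v0 : (eseq v i : ℤ) ∣ (v 0 : ℤ) := by exact_mod_cast eseq_dvd_v v (Nat.zero_le i)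
    have hsum : ∀ w : ℕ → ℕ, (eseq v i : ℤ) ∣ ∑ j ∈ Finset.Icc 1 i, (w j : ℤ) * v j := fun w =>
      Finset.dvd_sum fun j hj =>
        Dvd.dvd.mul_left (by exact_mod_cast eseq_dvd_v v (Finset.mem_Icc.mp hj).2) _
    have h1 : (eseq v i : ℤ) ∣ ((s (i+1) : ℤ) - t (i+1)) * v (i+1) := by
      have hD := hei_v0.trans hdvd
      have h2 := dvd_sub (dvd_sub hD (hsum s)) (dvd_neg.mpr (hsum t))
      have : (∑ j ∈ Finset.Icc 1 i, (s j : ℤ) * v j + (s (i+1) : ℤ) * v (i+1)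
          - (∑ j ∈ Finset.Icc 1 i, (t j : ℤ) * v j + (t (i+1) : ℤ) * v (i+1)))
          - (∑ j ∈ Finset.Icc 1 i, (s j : ℤ) * v j)
          - -(∑ j ∈ Finset.Icc 1 i, (t j : ℤ) * v j)
          = ((s (i+1) : ℤ) - t (i+1)) * v (i+1) := by ring
      rwa [this] at h2
    have hvdvd : eseq v (i+1) ∣ v (i+1) := eseq_dvd_v v (le_refl (i+1))
    have huv : (v (i+1) : ℤ) = (eseq v (i+1) : ℤ) * ((v (i+1) / eseq v (i+1) : ℕ) : ℤ) := by
      exact_mod_cast (Nat.mul_div_cancel' hvdvd).symm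
    have hne' : (nseq v (i+1) : ℤ) * (eseq v (i+1) : ℤ) = (eseq v i : ℤ) := by
      exact_mod_cast nseq_mul_eseq v hpos i
    have he'pos : (0:ℤ) < (eseq v (i+1) : ℤ) := by exact_mod_cast eseq_pos v hpos (i+1)
    have h2 : (nseq v (i+1) : ℤ) ∣ ((s (i+1) : ℤ) - t (i+1)) * ((v (i+1) / eseq v (i+1) : ℕ) : ℤ) := by
      obtain ⟨c, hcc⟩ := h1
      refine ⟨c, mul_left_cancel₀ he'pos.ne' ?_⟩
      rw [huv, ← hne'] at hcc
      linear_combination hcc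
    have hcon : IsCoprime ((nseq v (i+1) : ℤ)) ((v (i+1) / eseq v (i+1) : ℕ) : ℤ) := by
      rw [Int.isCoprime_iff_gcd_eq_one]
      rw [Int.gcd_natCast_natCast]; exact coprime_nseq v hpos i
    have h3 : (nseq v (i+1) : ℤ) ∣ ((s (i+1) : ℤ) - t (i+1)) :=
      hcon.dvd_of_dvd_mul_right h2
    have hstep : s (i+1) = t (i+1) := by
      have hbs := hs (i+1) (by omega) (le_refl _)
      have hbt := ht (i+1) (by omega) (le_refl _)
      have habs : |(s (i+1) : ℤ) - t (i+1)| < (nseq v (i+1) : ℤ) := by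
        rw [abs_lt]
        omega
      have := Int.eq_zero_of_abs_lt_dvd h3 habs
      omega
    have hdvd' : (v 0 : ℤ) ∣ (∑ j ∈ Finset.Icc 1 i, (s j : ℤ) * v j)
        - ∑ j ∈ Finset.Icc 1 i, (t j : ℤ) * v j := by
      rw [hstep] at hdvd
      have heq : (∑ j ∈ Finset.Icc 1 i, (s j : ℤ) * v j + (t (i+1) : ℤ) * v (i+1)
          - (∑ j ∈ Finset.Icc 1 i, (t j : ℤ) * v j + (t (i+1) : ℤ) * v (i+1)))
          = (∑ j ∈ Finset.Icc 1 i, (s j : ℤ) * v j)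
          - ∑ j ∈ Finset.Icc 1 i, (t j : ℤ) * v j := by ring
      rwa [heq] at hdvd
    intro j hj1 hj2
    by_cases hj : j = i + 1
    · exact hj ▸ hstep
    · exact ih (by omega) s t (fun j a b => hs j a (by omega)) (fun j a b => ht j a (by omega))
        hdvd' j hj1 (by omega)

end Aux

/-- For `v_0 < ⋯ < v_g` positive with `gcd = 1` satisfying the Bresinsky
conditions, the Apéry set of `Γ \ {0}` is
`{v_0} ∪ ({Σ_{i=1}^g s_i v_i : 0 ≤ s_i < n_i} \ {0})`, it has exactly `v_0`
elements, and `Γ \ {0}` is covered by its Apéry set. -/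
theorem apery_of_gamma (g : ℕ) (v : ℕ → ℕ) (hpos : 0 < v 0)
    (hmono : ∀ i j, i < j → j ≤ g → v i < v j) (hgcd : eseq v g = 1)
    (hbre : ∀ i, 1 ≤ i → i ≤ g → 2 ≤ nseq v i ∧ nseq v (i - 1) * v (i - 1) < v i) :
    apery (semigroupGen g v \ {0}) = insert (v 0)
        ({x | ∃ s : ℕ → ℕ, (∀ i, 1 ≤ i → i ≤ g → s i < nseq v i) ∧
            x = ∑ i ∈ Finset.Icc 1 g, s i * v i} \ {0}) ∧
      (apery (semigroupGen g v \ {0})).ncard = v 0 ∧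
      CoveredByApery (semigroupGen g v \ {0}) := by
  set A0 := {x : ℕ | ∃ s : ℕ → ℕ, (∀ i, 1 ≤ i → i ≤ g → s i < nseq v i) ∧
      x = ∑ i ∈ Finset.Icc 1 g, s i * v i} with hA0def
  set S := semigroupGen g v \ {0} with hSdef
  -- basic facts
  have hvle : ∀ i, i ≤ g → v 0 ≤ v i := by
    intro i hi
    rcases Nat.eq_zero_or_pos i with h | h
    · simp [h]
    · exact (hmono 0 i h hi).le
  have hSlb : ∀ x ∈ S, v 0 ≤ x := by
    rintro x ⟨⟨c, rfl⟩, hx0⟩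
    simp only [Set.mem_singleton_iff] at hx0
    have hex : ∃ i ∈ Finset.range (g+1), c i * v i ≠ 0 := by
      by_contra h
      push_neg at h
      exact hx0 (Finset.sum_eq_zero h)
    obtain ⟨i, hi, hne⟩ := hex
    have hci : 0 < c i := Nat.pos_of_ne_zero fun h => hne (by simp [h])
    have h1 : v 0 ≤ c i * v i := by
      calc v 0 ≤ v i := hvle i (Nat.lt_succ_iff.mp (Finset.mem_range.mp hi))
        _ = 1 * v i := (one_mul _).symm
        _ ≤ c i * v i := Nat.mul_le_mul_right _ hci
    exact h1.trans (Finset.single_le_sum (f := fun i => c i * v i)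
      (fun _ _ => Nat.zero_le _) hi)
  have hv0S : v 0 ∈ S := ⟨sg_gen v (Nat.zero_le g), by simp [hpos.ne']⟩
  have hinf : sInf S = v 0 := le_antisymm (Nat.sInf_le hv0S) (le_csInf ⟨v 0, hv0S⟩ hSlb)
  have hA0Γ : ∀ a ∈ A0, a ∈ semigroupGen g v := by
    rintro a ⟨s, _, rfl⟩
    exact sum_Icc_mem_sg v g s
  have hred : ∀ x ∈ semigroupGen g v, ∃ a ∈ A0, ∃ k, x = a + k * v 0 := by
    intro x hx
    obtain ⟨s, hs, k, hk⟩ := bres_red v g hpos hbre g le_rfl x hx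
    exact ⟨_, ⟨s, hs, rfl⟩, k, by omega⟩
  have hinjA : ∀ a ∈ A0, ∀ b ∈ A0, a % v 0 = b % v 0 → a = b := by
    rintro a ⟨s, hsb, rfl⟩ b ⟨t, htb, rfl⟩ hmod
    have hdvd : (v 0 : ℤ) ∣ (∑ j ∈ Finset.Icc 1 g, (s j : ℤ) * v j)
        - ∑ j ∈ Finset.Icc 1 g, (t j : ℤ) * v j := by
      have h1 : (∑ j ∈ Finset.Icc 1 g, t j * v j) ≡ (∑ j ∈ Finset.Icc 1 g, s j * v j)
          [MOD v 0] := hmod.symm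
      have h2 := h1.dvd
      push_cast at h2 ⊢
      exact h2
    have hall := bres_inj v g hpos g le_rfl s t hsb htb hdvd
    exact Finset.sum_congr rfl fun j hj => by
      rw [hall j (Finset.mem_Icc.mp hj).1 (Finset.mem_Icc.mp hj).2]
  have h0A : (0 : ℕ) ∈ A0 :=
    ⟨fun _ => 0, fun i _ _ => nseq_pos v hpos i, by simp⟩
  have hv0nA : v 0 ∉ A0 := by
    intro h
    have := hinjA _ h _ h0A (by simp)
    omega
  have hAS : ∀ a ∈ A0, a ≠ 0 → a ∈ S := fun a ha h0 => ⟨hA0Γ a ha, by simp [h0]⟩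
  -- the Apéry set
  have happ : apery S = insert (v 0) (A0 \ {0}) := by
    ext x
    simp only [apery, hinf, Set.mem_setOf_eq, Set.mem_insert_iff, Set.mem_diff,
      Set.mem_singleton_iff]
    constructor
    · rintro ⟨hxS, hmin⟩
      obtain ⟨a, haA, k, hk⟩ := hred x hxS.1
      by_cases ha0 : a = 0
      · left
        subst ha0
        simp only [zero_add] at hk
        have h1 := hmin (v 0) hv0S (by rw [Nat.mod_self, hk, Nat.mul_mod_left])
        exact le_antisymm h1 (hSlb x hxS)
      · right
        have h1 := hmin a (hAS a haA ha0) (by rw [hk, Nat.add_mul_mod_self_right])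
        have h2 : a ≤ x := hk ▸ Nat.le_add_right a _
        have hxa : x = a := le_antisymm h1 h2
        exact ⟨hxa ▸ haA, hxa ▸ ha0⟩
    · rintro (rfl | ⟨hxA, hx0⟩)
      · exact ⟨hv0S, fun b hb _ => hSlb b hb⟩
      · refine ⟨hAS x hxA hx0, fun b hb hmod => ?_⟩
        obtain ⟨a, haA, k, hk⟩ := hred b hb.1
        have hax : a = x := hinjA a haA x hxA (by rw [← hmod, hk, Nat.add_mul_mod_self_right])
        rw [hk, hax]
        exact Nat.le_add_right _ _
  -- cardinality
  have hsurj : ∀ r ∈ Set.Iio (v 0), ∃ a ∈ A0, a % v 0 = r := by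
    intro r hr
    simp only [Set.mem_Iio] at hr
    set C := ∑ j ∈ Finset.Icc 1 g, nseq v j * v j with hC
    have hbound : (∑ j ∈ Finset.Icc 1 g, ((nseq v j : ℤ) - 1) * v j) - v 0
        < ((r + v 0 * (C + 1) : ℕ) : ℤ) := by
      have h1 : (∑ j ∈ Finset.Icc 1 g, ((nseq v j : ℤ) - 1) * v j) ≤ (C : ℤ) := by
        rw [hC]
        push_cast
        refine Finset.sum_le_sum fun j _ => ?_
        have : (0:ℤ) ≤ (v j : ℤ) := by positivity
        nlinarith
      have h2 : (C : ℤ) + 1 ≤ ((r + v 0 * (C + 1) : ℕ) : ℤ) := by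
        push_cast
        nlinarith [show (1:ℤ) ≤ (v 0 : ℤ) by exact_mod_cast hpos,
          show (0:ℤ) ≤ (C:ℤ) by positivity, show (0:ℤ) ≤ (r:ℤ) by positivity]
      have h3 : (0:ℤ) < (v 0 : ℤ) := by exact_mod_cast hpos
      linarith
    obtain ⟨y, hy, hyx⟩ := bres_conductor v g hpos hbre g le_rfl _
      (by rw [hgcd]; exact one_dvd _) hbound
    have hy' : y = r + v 0 * (C + 1) := by exact_mod_cast hyx
    subst hy'
    obtain ⟨a, haA, k, hk⟩ := hred _ hy
    refine ⟨a, haA, ?_⟩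
    have h4 : a % v 0 = (r + v 0 * (C+1)) % v 0 := by rw [hk, Nat.add_mul_mod_self_right]
    rw [h4, Nat.add_mul_mod_self_left, Nat.mod_eq_of_lt hr]
  -- finiteness and cardinality of A0
  have hinjOn : Set.InjOn (· % v 0) A0 := fun a ha b hb h => hinjA a ha b hb h
  have himg : (· % v 0) '' A0 = Set.Iio (v 0) := by
    apply Set.eq_of_subset_of_subset
    · rintro r ⟨a, _, rfl⟩
      exact Nat.mod_lt _ hpos
    · intro r hr
      obtain ⟨a, haA, har⟩ := hsurj r hr
      exact ⟨a, haA, har⟩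
  have hAfin : A0.Finite :=
    Set.Finite.of_finite_image (himg ▸ Set.finite_Iio _) hinjOn
  have hAcard : A0.ncard = v 0 := by
    have h1 : ((· % v 0) '' A0).ncard = A0.ncard := Set.ncard_image_of_injOn hinjOn
    have h2 : Set.Iio (v 0) = ↑(Finset.range (v 0)) := by ext x; simp
    rw [himg, h2, Set.ncard_coe_finset, Finset.card_range] at h1
    exact h1.symm
  have hcard : (apery S).ncard = v 0 := by
    rw [happ, Set.ncard_insert_of_notMem (fun h => hv0nA h.1) hAfin.diff,
      Set.ncard_diff_singleton_of_mem h0A, hAcard]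
    omega
  refine ⟨happ, hcard, ?_⟩
  constructor
  · rw [hinf]; exact hcard
  · rw [hinf]
    apply Set.eq_of_subset_of_subset
    · intro x hxS
      obtain ⟨a, haA, k, hk⟩ := hred x hxS.1
      simp only [Set.mem_setOf_eq]
      by_cases ha0 : a = 0
      · subst ha0
        simp only [zero_add] at hk
        have hk1 : 1 ≤ k := by
          rcases Nat.eq_zero_or_pos k with h | h
          · exfalso; apply hxS.2; simp [hk, h]
          · exact h
        refine ⟨v 0, happ ▸ Set.mem_insert _ _, k - 1, ?_⟩
        rw [hk]
        cases k with
        | zero => omega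
        | succ n => simp [Nat.succ_mul, Nat.add_mul]; ring
      · exact ⟨a, happ ▸ Set.mem_insert_of_mem _ ⟨haA, ha0⟩, k, hk⟩
    · rintro x ⟨a, haap, k, rfl⟩
      have haS : a ∈ S := by
        rw [happ] at haap
        rcases haap with rfl | ⟨haA, ha0⟩
        · exact hv0S
        · exact hAS a haA ha0
      refine ⟨sg_add v haS.1 (sg_nsmul v k (sg_gen v (Nat.zero_le g))), ?_⟩
      have ha0 : a ≠ 0 := fun h => haS.2 (by simp [h])
      simp only [Set.mem_singleton_iff]
      omega
end

section
/- Let C be a plane branch with value semigroup Γ_C minimally generated by v_0 < v_1 < ... < v_g (g ≥ 1). If Λ_C \ Γ_C ≠ ∅, then min(Λ_C \ Γ_C) > v_0 + v_1. -/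
open PowerSeries

/-- Substitution of two power series (with zero constant term) into a
two-variable power series: `h(a, b)`. Valid (agrees with the analytic
substitution) whenever `a` and `b` have zero constant term. -/
noncomputable def subst2 (a b : PowerSeries ℂ) (h : MvPowerSeries (Fin 2) ℂ) :
    PowerSeries ℂ :=
  PowerSeries.mk fun k =>
    ∑ i ∈ Finset.range (k + 1), ∑ j ∈ Finset.range (k + 1),
      MvPowerSeries.coeff (Finsupp.single 0 i + Finsupp.single 1 j) h *
        PowerSeries.coeff k (a ^ i * b ^ j)

/-- Formal derivative with respect to `t`. -/
noncomputable def dt (f : PowerSeries ℂ) : PowerSeries ℂ :=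
  PowerSeries.mk fun k => (k + 1 : ℂ) * PowerSeries.coeff (k + 1) f

/-- A plane branch given by a primitive Puiseux parametrization
`φ(t) = (t^n, y(t))` with `n ≥ 1`, `y(t) = ∑_{i ≥ n} a_i t^i` and
`gcd({n} ∪ {i : a_i ≠ 0}) = 1`. -/
structure PlaneBranch where
  n : ℕ
  y : PowerSeries ℂ
  one_le_n : 1 ≤ n
  coeff_vanish : ∀ i, PowerSeries.coeff i y ≠ 0 → n ≤ i
  primitive : ∀ d : ℕ, d ∣ n → (∀ i, PowerSeries.coeff i y ≠ 0 → d ∣ i) → d = 1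

/-- `φ*(h) = h(t^n, y(t))`. -/
noncomputable def PlaneBranch.pull (C : PlaneBranch) (h : MvPowerSeries (Fin 2) ℂ) :
    PowerSeries ℂ :=
  subst2 (PowerSeries.X ^ C.n) C.y h

/-- The value semigroup `Γ_C = {ord_t φ*(h) : h ∈ ℂ⟦x,y⟧, φ*(h) ≠ 0}`. -/
noncomputable def PlaneBranch.Gamma (C : PlaneBranch) : Set ℕ :=
  {d | ∃ h : MvPowerSeries (Fin 2) ℂ, C.pull h ≠ 0 ∧ (C.pull h).order = (d : ℕ∞)}

/-- `φ*(ω)` for the 1-form `ω = A dx + B dy`: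
`φ*(ω) = φ*(A)·(t^n)' + φ*(B)·y'(t)`. -/
noncomputable def PlaneBranch.pullForm (C : PlaneBranch)
    (A B : MvPowerSeries (Fin 2) ℂ) : PowerSeries ℂ :=
  C.pull A * dt (PowerSeries.X ^ C.n) + C.pull B * dt C.y

/-- The value set of 1-forms `Λ_C = {ord_t (t·φ*(ω)) : ω ∈ Ω¹, φ*(ω) ≠ 0}`. -/
noncomputable def PlaneBranch.Lambda (C : PlaneBranch) : Set ℕ :=
  {d | ∃ A B : MvPowerSeries (Fin 2) ℂ, C.pullForm A B ≠ 0 ∧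
    (PowerSeries.X * C.pullForm A B).order = (d : ℕ∞)}

/-- `v_0 < v_1 < ⋯ < v_g` is a minimal system of generators of `Γ`. -/
def IsMinGen (Γ : Set ℕ) (g : ℕ) (v : ℕ → ℕ) : Prop :=
  (∀ i j, i < j → j ≤ g → v i < v j) ∧ Γ = semigroupGen g v ∧
    ∀ j ≤ g, ∀ c : ℕ → ℕ, c j = 0 → v j ≠ ∑ i ∈ Finset.range (g + 1), c i * v i

section Aux

open Finset MvPolynomial

noncomputable section

abbrev M2 := MvPowerSeries (Fin 2) ℂ

/-- the exponent pair `(i,j)` as a `Finsupp`. -/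
def pr (i j : ℕ) : Fin 2 →₀ ℕ := Finsupp.single 0 i + Finsupp.single 1 j

lemma pr_apply0 (i j : ℕ) : pr i j 0 = i := by
  simp [pr, Finsupp.single_apply]

lemma pr_apply1 (i j : ℕ) : pr i j 1 = j := by
  simp [pr, Finsupp.single_apply]

lemma fin2_repr (d : Fin 2 →₀ ℕ) : d = pr (d 0) (d 1) := by
  ext s
  have h2 : s = 0 ∨ s = 1 := by omega
  rcases h2 with rfl | rfl
  · rw [pr_apply0]
  · rw [pr_apply1]

lemma pr_eq_iff {i j i' j' : ℕ} : pr i j = pr i' j' ↔ i = i' ∧ j = j' := by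
  constructor
  · intro h
    constructor
    · have := congrFun (congrArg (fun f : Fin 2 →₀ ℕ => (f : Fin 2 → ℕ)) h) 0
      simpa [pr_apply0] using this
    · have := congrFun (congrArg (fun f : Fin 2 →₀ ℕ => (f : Fin 2 → ℕ)) h) 1
      simpa [pr_apply1] using this
  · rintro ⟨rfl, rfl⟩; rfl

lemma coeff_subst2 (a b : PowerSeries ℂ) (h : M2) (k : ℕ) :
    PowerSeries.coeff k (subst2 a b h) =
      ∑ i ∈ range (k + 1), ∑ j ∈ range (k + 1),
        MvPowerSeries.coeff (pr i j) h * PowerSeries.coeff k (a ^ i * b ^ j) := by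
  simp [subst2, pr, PowerSeries.coeff_mk]

/-- collapsing a double sum against a delta. -/
lemma double_sum_pr (K : ℕ) (d : Fin 2 →₀ ℕ) (F : ℕ → ℕ → ℂ) :
    (∑ i ∈ range (K + 1), ∑ j ∈ range (K + 1), if pr i j = d then F i j else 0)
      = if d 0 ≤ K ∧ d 1 ≤ K then F (d 0) (d 1) else 0 := by
  have hcond : ∀ i j : ℕ, (pr i j = d) ↔ (i = d 0 ∧ j = d 1) := by
    intro i j
    constructor
    · intro h
      constructor
      · rw [← h, pr_apply0]
      · rw [← h, pr_apply1]
    · rintro ⟨rfl, rfl⟩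
      exact (fin2_repr d).symm
  have : ∀ i ∈ range (K+1), (∑ j ∈ range (K + 1), if pr i j = d then F i j else 0)
      = if i = d 0 then (if d 1 ≤ K then F i (d 1) else 0) else 0 := by
    intro i _
    by_cases hi : i = d 0
    · subst hi
      rw [if_pos rfl]
      by_cases hj : d 1 ≤ K
      · rw [if_pos hj]
        rw [Finset.sum_eq_single (d 1)]
        · rw [if_pos ((hcond _ _).2 ⟨rfl, rfl⟩)]
        · intro j _ hjne
          rw [if_neg (fun hc => hjne ((hcond _ _).1 hc).2)]
        · intro habs
          exact absurd (Finset.mem_range.2 (Nat.lt_succ_of_le hj)) habs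
      · rw [if_neg hj]
        apply Finset.sum_eq_zero
        intro j hjm
        rw [if_neg]
        intro hc
        exact hj (((hcond _ _).1 hc).2 ▸ (Nat.lt_succ_iff.1 (Finset.mem_range.1 hjm)))
    · rw [if_neg hi]
      apply Finset.sum_eq_zero
      intro j _
      rw [if_neg (fun hc => hi ((hcond _ _).1 hc).1)]
  rw [Finset.sum_congr rfl this]
  by_cases hi : d 0 ≤ K
  · rw [Finset.sum_eq_single (d 0)]
    · rw [if_pos rfl]
      by_cases hj : d 1 ≤ K
      · rw [if_pos hj, if_pos ⟨hi, hj⟩]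
      · rw [if_neg hj, if_neg (fun hc => hj hc.2)]
    · intro i _ hine; rw [if_neg hine]
    · intro habs; exact absurd (Finset.mem_range.2 (Nat.lt_succ_of_le hi)) habs
  · rw [if_neg (fun hc => hi hc.1)]
    apply Finset.sum_eq_zero
    intro i him
    rw [if_neg]
    intro hc
    exact hi (hc ▸ Nat.lt_succ_iff.1 (Finset.mem_range.1 him))

lemma finsupp_prod_pr {T : Type*} [CommMonoid T] (u v : T) (d : Fin 2 →₀ ℕ) :
    (d.prod fun s e => (![u, v] : Fin 2 → T) s ^ e) = u ^ d 0 * v ^ d 1 := by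
  rw [Finsupp.prod_fintype]
  · simp [Fin.prod_univ_two]
  · intro _; exact pow_zero _

/-- Generic evaluation of `aeval ![u,v]` of a polynomial against a coefficient
functional, assuming high powers vanish. -/
lemma coeff_aeval_generic {T : Type*} [CommRing T] [Algebra ℂ T] (ε : T →ₗ[ℂ] ℂ)
    (u v : T) (K : ℕ) (hvan : ∀ i j : ℕ, K < i + j → ε (u ^ i * v ^ j) = 0)
    (r : MvPolynomial (Fin 2) ℂ) :
    ε (MvPolynomial.aeval ![u, v] r) =
      ∑ i ∈ range (K + 1), ∑ j ∈ range (K + 1),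
        MvPolynomial.coeff (pr i j) r * ε (u ^ i * v ^ j) := by
  induction r using MvPolynomial.induction_on' with
  | add p q hp hq =>
    simp only [map_add, MvPolynomial.coeff_add, add_mul, Finset.sum_add_distrib, hp, hq]
  | monomial d c =>
    rw [MvPolynomial.aeval_monomial, finsupp_prod_pr]
    have hsmul : algebraMap ℂ T c * (u ^ d 0 * v ^ d 1) = c • (u ^ d 0 * v ^ d 1) := by
      rw [Algebra.smul_def]
    rw [hsmul, map_smul]
    have : ∀ i j : ℕ, MvPolynomial.coeff (pr i j) (MvPolynomial.monomial d c) * ε (u ^ i * v ^ j)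
        = if pr i j = d then c * ε (u ^ i * v ^ j) else 0 := by
      intro i j
      rw [MvPolynomial.coeff_monomial]
      by_cases hc : pr i j = d
      · rw [if_pos hc.symm, if_pos hc]
      · rw [if_neg (fun hh => hc hh.symm), if_neg hc, zero_mul]
    simp only [this]
    rw [double_sum_pr K d (fun i j => c * ε (u ^ i * v ^ j))]
    by_cases hd : d 0 ≤ K ∧ d 1 ≤ K
    · rw [if_pos hd]; simp
    · rw [if_neg hd]
      have : K < d 0 + d 1 := by
        rcases Nat.lt_or_ge K (d 0 + d 1) with h | h
        · exact h
        · exact absurd ⟨le_trans (Nat.le_add_right _ _) h,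
            le_trans (Nat.le_add_left _ _) h⟩ hd
      rw [hvan _ _ this]
      simp

end

end Aux

section Aux2

open Finset MvPolynomial

noncomputable section

lemma one_le_order_iff {f : PowerSeries ℂ} :
    1 ≤ f.order ↔ PowerSeries.constantCoeff f = 0 := by
  constructor
  · intro h
    have := PowerSeries.coeff_of_lt_order 0 (lt_of_lt_of_le (by norm_num) h)
    simpa [PowerSeries.coeff_zero_eq_constantCoeff] using this
  · intro h
    apply PowerSeries.nat_le_order
    intro i hi
    interval_cases i
    simpa [PowerSeries.coeff_zero_eq_constantCoeff] using h

lemma le_order_pow {f : PowerSeries ℂ} (hf : 1 ≤ f.order) (i : ℕ) :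
    (i : ℕ∞) ≤ (f ^ i).order := by
  induction i with
  | zero => simp
  | succ i ih =>
    have : f ^ (i + 1) = f ^ i * f := pow_succ f i
    rw [this]
    calc ((i + 1 : ℕ) : ℕ∞) = (i : ℕ∞) + 1 := by push_cast; ring
    _ ≤ (f ^ i).order + f.order := add_le_add ih hf
    _ ≤ (f ^ i * f).order := PowerSeries.le_order_mul _ _

lemma coeff_pow_mul_eq_zero {a b : PowerSeries ℂ}
    (ha : PowerSeries.constantCoeff a = 0) (hb : PowerSeries.constantCoeff b = 0)
    {i j k : ℕ} (hk : k < i + j) :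
    PowerSeries.coeff k (a ^ i * b ^ j) = 0 := by
  apply PowerSeries.coeff_of_lt_order
  calc (k : ℕ∞) < ((i + j : ℕ) : ℕ∞) := by exact_mod_cast hk
  _ = (i : ℕ∞) + (j : ℕ∞) := by push_cast; ring
  _ ≤ (a ^ i).order + (b ^ j).order :=
      add_le_add (le_order_pow (one_le_order_iff.2 ha) i) (le_order_pow (one_le_order_iff.2 hb) j)
  _ ≤ (a ^ i * b ^ j).order := PowerSeries.le_order_mul _ _

/-- Truncation of a 2-variable power series to a polynomial keeping exponents `≤ k`. -/
def trunc2 (h : MvPowerSeries (Fin 2) ℂ) (k : ℕ) : MvPolynomial (Fin 2) ℂ :=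
  ∑ i ∈ range (k + 1), ∑ j ∈ range (k + 1),
    MvPolynomial.monomial (pr i j) (MvPowerSeries.coeff (pr i j) h)

lemma coeff_trunc2 (h : MvPowerSeries (Fin 2) ℂ) (k : ℕ) (d : Fin 2 →₀ ℕ) :
    MvPolynomial.coeff d (trunc2 h k) =
      if d 0 ≤ k ∧ d 1 ≤ k then MvPowerSeries.coeff d h else 0 := by
  rw [trunc2]
  simp only [MvPolynomial.coeff_sum, MvPolynomial.coeff_monomial]
  rw [double_sum_pr k d (fun i j => MvPowerSeries.coeff (pr i j) h)]
  congr 1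
  rw [← fin2_repr]

/-- KEY: the coefficient of `subst2 a b h` can be computed via any polynomial
matching `h` in low total degrees. -/
lemma coeff_subst2_eq_aeval {a b : PowerSeries ℂ}
    (ha : PowerSeries.constantCoeff a = 0) (hb : PowerSeries.constantCoeff b = 0)
    (h : MvPowerSeries (Fin 2) ℂ) (r : MvPolynomial (Fin 2) ℂ) (k : ℕ)
    (hm : ∀ i j : ℕ, i + j ≤ k →
      MvPolynomial.coeff (pr i j) r = MvPowerSeries.coeff (pr i j) h) :
    PowerSeries.coeff k (subst2 a b h) =
      PowerSeries.coeff k (MvPolynomial.aeval ![a, b] r) := by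
  rw [coeff_subst2,
    coeff_aeval_generic (PowerSeries.coeff k) a b k
      (fun i j hij => coeff_pow_mul_eq_zero ha hb hij) r]
  apply Finset.sum_congr rfl
  intro i _
  apply Finset.sum_congr rfl
  intro j _
  by_cases hij : i + j ≤ k
  · rw [hm i j hij]
  · rw [coeff_pow_mul_eq_zero ha hb (Nat.lt_of_not_le hij), mul_zero, mul_zero]

lemma subst2_add (a b : PowerSeries ℂ) (h h' : MvPowerSeries (Fin 2) ℂ) :
    subst2 a b (h + h') = subst2 a b h + subst2 a b h' := by
  ext k
  simp [coeff_subst2, add_mul, Finset.sum_add_distrib]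

lemma subst2_zero (a b : PowerSeries ℂ) : subst2 a b 0 = 0 := by
  ext k; simp [coeff_subst2]

lemma subst2_sub (a b : PowerSeries ℂ) (h h' : MvPowerSeries (Fin 2) ℂ) :
    subst2 a b (h - h') = subst2 a b h - subst2 a b h' := by
  ext k
  simp [coeff_subst2, sub_mul, Finset.sum_sub_distrib]

/-- `subst2` as an additive monoid hom (for `map_sum`). -/
def subst2Hom (a b : PowerSeries ℂ) : MvPowerSeries (Fin 2) ℂ →+ PowerSeries ℂ where
  toFun := subst2 a b
  map_zero' := subst2_zero a b
  map_add' := subst2_add a b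

lemma subst2_sum {ι : Type*} (a b : PowerSeries ℂ) (s : Finset ι)
    (f : ι → MvPowerSeries (Fin 2) ℂ) :
    subst2 a b (∑ i ∈ s, f i) = ∑ i ∈ s, subst2 a b (f i) :=
  map_sum (subst2Hom a b) f s

lemma subst2_C (a b : PowerSeries ℂ) (c : ℂ) :
    subst2 a b (MvPowerSeries.C c) = PowerSeries.C c := by
  ext k
  rw [coeff_subst2]
  have : ∀ i j : ℕ, MvPowerSeries.coeff (pr i j) (MvPowerSeries.C c) *
      PowerSeries.coeff k (a ^ i * b ^ j)
      = if pr i j = 0 then c * PowerSeries.coeff k (a ^ i * b ^ j) else 0 := by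
    intro i j
    rw [MvPowerSeries.coeff_C, ite_mul, zero_mul]
  simp only [this]
  rw [double_sum_pr k 0 (fun i j => c * PowerSeries.coeff k (a ^ i * b ^ j))]
  simp [PowerSeries.coeff_one]
  split_ifs with h
  · subst h; simp
  · simp [PowerSeries.coeff_C, h]

lemma subst2_one (a b : PowerSeries ℂ) : subst2 a b 1 = 1 := by
  have := subst2_C a b 1
  simpa using this

lemma subst2_X0 {a b : PowerSeries ℂ} (ha : PowerSeries.constantCoeff a = 0) :
    subst2 a b (MvPowerSeries.X 0) = a := by
  ext k
  rw [coeff_subst2]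
  have hX : (MvPowerSeries.X 0 : MvPowerSeries (Fin 2) ℂ) =
      MvPowerSeries.monomial (Finsupp.single 0 1) 1 := MvPowerSeries.X_def 0
  have : ∀ i j : ℕ, MvPowerSeries.coeff (pr i j) (MvPowerSeries.X 0) *
      PowerSeries.coeff k (a ^ i * b ^ j)
      = if pr i j = pr 1 0 then (1:ℂ) * PowerSeries.coeff k (a ^ i * b ^ j) else 0 := by
    intro i j
    have hpr : pr 1 0 = Finsupp.single (0 : Fin 2) 1 := by
      rw [pr]; simp
    rw [hX, MvPowerSeries.coeff_monomial, ← hpr, ite_mul, zero_mul]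
  simp only [this]
  rw [double_sum_pr k (pr 1 0) (fun i j => (1:ℂ) * PowerSeries.coeff k (a ^ i * b ^ j))]
  rw [pr_apply0, pr_apply1]
  by_cases hk : 1 ≤ k
  · rw [if_pos ⟨hk, Nat.zero_le k⟩]
    simp
  · have hk0 : k = 0 := by omega
    subst hk0
    rw [if_neg (by omega)]
    rw [← PowerSeries.coeff_zero_eq_constantCoeff] at ha
    rw [ha]

lemma subst2_X1 {a b : PowerSeries ℂ} (hb : PowerSeries.constantCoeff b = 0) :
    subst2 a b (MvPowerSeries.X 1) = b := by
  ext k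
  rw [coeff_subst2]
  have hX : (MvPowerSeries.X 1 : MvPowerSeries (Fin 2) ℂ) =
      MvPowerSeries.monomial (Finsupp.single 1 1) 1 := MvPowerSeries.X_def 1
  have : ∀ i j : ℕ, MvPowerSeries.coeff (pr i j) (MvPowerSeries.X 1) *
      PowerSeries.coeff k (a ^ i * b ^ j)
      = if pr i j = pr 0 1 then (1:ℂ) * PowerSeries.coeff k (a ^ i * b ^ j) else 0 := by
    intro i j
    have hpr : pr 0 1 = Finsupp.single (1 : Fin 2) 1 := by
      rw [pr]; simp
    rw [hX, MvPowerSeries.coeff_monomial, ← hpr, ite_mul, zero_mul]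
  simp only [this]
  rw [double_sum_pr k (pr 0 1) (fun i j => (1:ℂ) * PowerSeries.coeff k (a ^ i * b ^ j))]
  rw [pr_apply0, pr_apply1]
  by_cases hk : 1 ≤ k
  · rw [if_pos ⟨Nat.zero_le k, hk⟩]
    simp
  · have hk0 : k = 0 := by omega
    subst hk0
    rw [if_neg (by omega)]
    rw [← PowerSeries.coeff_zero_eq_constantCoeff] at hb
    rw [hb]

end

end Aux2

section Aux3

open Finset MvPolynomial

noncomputable section

lemma subst2_mul {a b : PowerSeries ℂ}
    (ha : PowerSeries.constantCoeff a = 0) (hb : PowerSeries.constantCoeff b = 0)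
    (h h' : MvPowerSeries (Fin 2) ℂ) :
    subst2 a b (h * h') = subst2 a b h * subst2 a b h' := by
  classical
  ext k
  have hmatch : ∀ (H : MvPowerSeries (Fin 2) ℂ) (k' : ℕ), k' ≤ k → ∀ i j : ℕ, i + j ≤ k' →
      MvPolynomial.coeff (pr i j) (trunc2 H k) = MvPowerSeries.coeff (pr i j) H := by
    intro H k' hk' i j hij
    rw [coeff_trunc2, if_pos]
    constructor
    · rw [pr_apply0]; omega
    · rw [pr_apply1]; omega
  have Lmul : ∀ i j : ℕ, i + j ≤ k →
      MvPolynomial.coeff (pr i j) (trunc2 h k * trunc2 h' k)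
        = MvPowerSeries.coeff (pr i j) (h * h') := by
    intro i j hij
    rw [MvPolynomial.coeff_mul, MvPowerSeries.coeff_mul]
    apply Finset.sum_congr rfl
    intro x hx
    have hsum : x.1 + x.2 = pr i j := (Finset.HasAntidiagonal.mem_antidiagonal.1 hx)
    have h10 : x.1 0 ≤ k := by
      have : x.1 0 + x.2 0 = i := by
        rw [← pr_apply0 i j, ← hsum]; rfl
      omega
    have h11 : x.1 1 ≤ k := by
      have : x.1 1 + x.2 1 = j := by
        rw [← pr_apply1 i j, ← hsum]; rfl
      omega
    have h20 : x.2 0 ≤ k := by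
      have : x.1 0 + x.2 0 = i := by
        rw [← pr_apply0 i j, ← hsum]; rfl
      omega
    have h21 : x.2 1 ≤ k := by
      have : x.1 1 + x.2 1 = j := by
        rw [← pr_apply1 i j, ← hsum]; rfl
      omega
    rw [coeff_trunc2, coeff_trunc2, if_pos ⟨h10, h11⟩, if_pos ⟨h20, h21⟩]
  have L : PowerSeries.coeff k (subst2 a b (h * h'))
      = PowerSeries.coeff k (MvPolynomial.aeval ![a, b] (trunc2 h k * trunc2 h' k)) :=
    coeff_subst2_eq_aeval ha hb _ _ k Lmul
  rw [L, map_mul, PowerSeries.coeff_mul, PowerSeries.coeff_mul]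
  apply Finset.sum_congr rfl
  intro x hx
  have hx1 : x.1 ≤ k := by
    have := Finset.HasAntidiagonal.mem_antidiagonal.1 hx; omega
  have hx2 : x.2 ≤ k := by
    have := Finset.HasAntidiagonal.mem_antidiagonal.1 hx; omega
  rw [coeff_subst2_eq_aeval ha hb h (trunc2 h k) x.1 (hmatch h x.1 hx1),
      coeff_subst2_eq_aeval ha hb h' (trunc2 h' k) x.2 (hmatch h' x.2 hx2)]

lemma subst2_pow {a b : PowerSeries ℂ}
    (ha : PowerSeries.constantCoeff a = 0) (hb : PowerSeries.constantCoeff b = 0)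
    (h : MvPowerSeries (Fin 2) ℂ) (e : ℕ) :
    subst2 a b (h ^ e) = subst2 a b h ^ e := by
  induction e with
  | zero => simpa using subst2_one a b
  | succ e ih => rw [pow_succ, pow_succ, subst2_mul ha hb, ih]

/-- Substitution into a 2-variable power series, with 2-variable power series values. -/
def msubst (F G h : MvPowerSeries (Fin 2) ℂ) : MvPowerSeries (Fin 2) ℂ :=
  fun d => ∑ i ∈ range (d 0 + d 1 + 1), ∑ j ∈ range (d 0 + d 1 + 1),
    MvPowerSeries.coeff (pr i j) h * MvPowerSeries.coeff d (F ^ i * G ^ j)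

lemma coeff_msubst (F G h : MvPowerSeries (Fin 2) ℂ) (d : Fin 2 →₀ ℕ) :
    MvPowerSeries.coeff d (msubst F G h) =
      ∑ i ∈ range (d 0 + d 1 + 1), ∑ j ∈ range (d 0 + d 1 + 1),
        MvPowerSeries.coeff (pr i j) h * MvPowerSeries.coeff d (F ^ i * G ^ j) := rfl

lemma mv_coeff_pow_eq_zero {F : MvPowerSeries (Fin 2) ℂ}
    (hF : MvPowerSeries.constantCoeff F = 0) :
    ∀ (i : ℕ) (d : Fin 2 →₀ ℕ), d 0 + d 1 < i → MvPowerSeries.coeff d (F ^ i) = 0 := by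
  classical
  intro i
  induction i with
  | zero => intro d hd; omega
  | succ i ih =>
    intro d hd
    rw [pow_succ, MvPowerSeries.coeff_mul]
    apply Finset.sum_eq_zero
    intro x hx
    have hsum : x.1 + x.2 = d := Finset.HasAntidiagonal.mem_antidiagonal.1 hx
    have h0 : x.1 0 + x.2 0 = d 0 := by rw [← hsum]; rfl
    have h1 : x.1 1 + x.2 1 = d 1 := by rw [← hsum]; rfl
    by_cases hx2 : x.2 = 0
    · rw [hx2]
      have : MvPowerSeries.coeff (0 : Fin 2 →₀ ℕ) F = 0 := by
        rw [MvPowerSeries.coeff_zero_eq_constantCoeff, hF]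
      rw [this, mul_zero]
    · have hpos : 1 ≤ x.2 0 + x.2 1 := by
        by_contra hc
        push_neg at hc
        have e0 : x.2 0 = 0 := by omega
        have e1 : x.2 1 = 0 := by omega
        apply hx2
        rw [fin2_repr x.2, e0, e1]
        simp [pr]
      have : x.1 0 + x.1 1 < i := by omega
      rw [ih x.1 this, zero_mul]

lemma mv_coeff_pow_mul_eq_zero {F G : MvPowerSeries (Fin 2) ℂ}
    (hF : MvPowerSeries.constantCoeff F = 0)
    (hG : MvPowerSeries.constantCoeff G = 0)
    {i j : ℕ} {d : Fin 2 →₀ ℕ} (hd : d 0 + d 1 < i + j) :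
    MvPowerSeries.coeff d (F ^ i * G ^ j) = 0 := by
  classical
  rw [MvPowerSeries.coeff_mul]
  apply Finset.sum_eq_zero
  intro x hx
  have hsum : x.1 + x.2 = d := Finset.HasAntidiagonal.mem_antidiagonal.1 hx
  have h0 : x.1 0 + x.2 0 = d 0 := by rw [← hsum]; rfl
  have h1 : x.1 1 + x.2 1 = d 1 := by rw [← hsum]; rfl
  rcases Nat.lt_or_ge (x.1 0 + x.1 1) i with hlt | hge
  · rw [mv_coeff_pow_eq_zero hF i x.1 hlt, zero_mul]
  · have : x.2 0 + x.2 1 < j := by omega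
    rw [mv_coeff_pow_eq_zero hG j x.2 this, mul_zero]

/-- KEY for `msubst`. -/
lemma coeff_msubst_eq_aeval {F G : MvPowerSeries (Fin 2) ℂ}
    (hF : MvPowerSeries.constantCoeff F = 0)
    (hG : MvPowerSeries.constantCoeff G = 0)
    (h : MvPowerSeries (Fin 2) ℂ) (r : MvPolynomial (Fin 2) ℂ) (d : Fin 2 →₀ ℕ)
    (hm : ∀ i j : ℕ, i + j ≤ d 0 + d 1 →
      MvPolynomial.coeff (pr i j) r = MvPowerSeries.coeff (pr i j) h) :
    MvPowerSeries.coeff d (msubst F G h) =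
      MvPowerSeries.coeff d (MvPolynomial.aeval ![F, G] r) := by
  rw [coeff_msubst,
    coeff_aeval_generic (MvPowerSeries.coeff d) F G (d 0 + d 1)
      (fun i j hij => mv_coeff_pow_mul_eq_zero hF hG hij) r]
  apply Finset.sum_congr rfl
  intro i _
  apply Finset.sum_congr rfl
  intro j _
  by_cases hij : i + j ≤ d 0 + d 1
  · rw [hm i j hij]
  · rw [mv_coeff_pow_mul_eq_zero hF hG (Nat.lt_of_not_le hij), mul_zero, mul_zero]

lemma constantCoeff_subst2 (a b : PowerSeries ℂ) (h : MvPowerSeries (Fin 2) ℂ) :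
    PowerSeries.constantCoeff (subst2 a b h) =
      MvPowerSeries.constantCoeff h := by
  rw [← PowerSeries.coeff_zero_eq_constantCoeff, coeff_subst2]
  simp only [zero_add, Finset.range_one, Finset.sum_singleton]
  rw [pow_zero, pow_zero, one_mul, PowerSeries.coeff_zero_eq_constantCoeff, map_one, mul_one]
  rw [← MvPowerSeries.coeff_zero_eq_constantCoeff]
  congr 1
  rw [pr]; simp

/-- The composition law. -/
lemma subst2_msubst {a b : PowerSeries ℂ} {F G : MvPowerSeries (Fin 2) ℂ}
    (ha : PowerSeries.constantCoeff a = 0) (hb : PowerSeries.constantCoeff b = 0)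
    (hF : MvPowerSeries.constantCoeff F = 0)
    (hG : MvPowerSeries.constantCoeff G = 0)
    (h : MvPowerSeries (Fin 2) ℂ) :
    subst2 a b (msubst F G h) = subst2 (subst2 a b F) (subst2 a b G) h := by
  have ha' : PowerSeries.constantCoeff (subst2 a b F) = 0 := by
    rw [constantCoeff_subst2, hF]
  have hb' : PowerSeries.constantCoeff (subst2 a b G) = 0 := by
    rw [constantCoeff_subst2, hG]
  -- polynomial evaluation commutes with subst2
  have poly : ∀ q : MvPolynomial (Fin 2) ℂ,
      subst2 a b (MvPolynomial.aeval ![F, G] q) =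
        MvPolynomial.aeval ![subst2 a b F, subst2 a b G] q := by
    intro q
    induction q using MvPolynomial.induction_on' with
    | add p q hp hq => rw [map_add, subst2_add, hp, hq, map_add]
    | monomial d c =>
      rw [MvPolynomial.aeval_monomial, MvPolynomial.aeval_monomial,
        finsupp_prod_pr, finsupp_prod_pr]
      have hAlg : (algebraMap ℂ (MvPowerSeries (Fin 2) ℂ) c) = MvPowerSeries.C c := rfl
      have hAlg2 : (algebraMap ℂ (PowerSeries ℂ) c) = PowerSeries.C c := rfl
      rw [hAlg, hAlg2, subst2_mul ha hb, subst2_mul ha hb, subst2_C,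
        subst2_pow ha hb, subst2_pow ha hb]
  ext k
  set q := trunc2 h k with hq
  have step2 : PowerSeries.coeff k (subst2 a b (msubst F G h))
      = PowerSeries.coeff k (subst2 a b (MvPolynomial.aeval ![F, G] q)) := by
    rw [coeff_subst2, coeff_subst2]
    apply Finset.sum_congr rfl
    intro i hi
    apply Finset.sum_congr rfl
    intro j hj
    by_cases hij : i + j ≤ k
    · congr 1
      rw [coeff_msubst_eq_aeval hF hG h q (pr i j)]
      intro i' j' hij'
      rw [coeff_trunc2, if_pos]
      rw [pr_apply0, pr_apply1] at hij'
      constructor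
      · rw [pr_apply0]; omega
      · rw [pr_apply1]; omega
    · rw [coeff_pow_mul_eq_zero ha hb (Nat.lt_of_not_le hij), mul_zero, mul_zero]
  rw [step2, poly q, coeff_subst2_eq_aeval ha' hb' h q k]
  intro i j hij
  rw [coeff_trunc2, if_pos]
  constructor
  · rw [pr_apply0]; omega
  · rw [pr_apply1]; omega

end

end Aux3

section Aux4

open Finset

noncomputable section

/-! ### dt lemmas -/

lemma coeff_dt (f : PowerSeries ℂ) (k : ℕ) :
    PowerSeries.coeff k (dt f) = (k + 1 : ℂ) * PowerSeries.coeff (k + 1) f := by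
  rw [dt, PowerSeries.coeff_mk]

lemma dt_add (f g : PowerSeries ℂ) : dt (f + g) = dt f + dt g := by
  ext k; simp [coeff_dt, mul_add]

lemma dt_sub (f g : PowerSeries ℂ) : dt (f - g) = dt f - dt g := by
  ext k; simp [coeff_dt, mul_sub]

def dtHom : PowerSeries ℂ →+ PowerSeries ℂ where
  toFun := dt
  map_zero' := by ext k; simp [coeff_dt]
  map_add' := dt_add

lemma dt_sum {ι : Type*} (s : Finset ι) (f : ι → PowerSeries ℂ) :
    dt (∑ i ∈ s, f i) = ∑ i ∈ s, dt (f i) := map_sum dtHom f s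

lemma dt_C_mul_X_pow (c : ℂ) (r : ℕ) (hr : 1 ≤ r) :
    dt (PowerSeries.C c * PowerSeries.X ^ r)
      = PowerSeries.C (c * r) * PowerSeries.X ^ (r - 1) := by
  ext k
  rw [coeff_dt, PowerSeries.coeff_C_mul, PowerSeries.coeff_C_mul,
    PowerSeries.coeff_X_pow, PowerSeries.coeff_X_pow]
  by_cases hk : k = r - 1
  · rw [if_pos hk, if_pos (by omega)]
    have : ((k : ℂ) + 1) = (r : ℂ) := by
      have : (k : ℕ) + 1 = r := by omega
      exact_mod_cast congrArg (Nat.cast : ℕ → ℂ) this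
    rw [this]; ring
  · rw [if_neg hk, if_neg (by omega)]
    simp

lemma dt_X_pow (r : ℕ) (hr : 1 ≤ r) :
    dt (PowerSeries.X ^ r : PowerSeries ℂ)
      = PowerSeries.C (r : ℂ) * PowerSeries.X ^ (r - 1) := by
  have := dt_C_mul_X_pow 1 r hr
  simpa using this

lemma X_dt_eq (f : PowerSeries ℂ) :
    PowerSeries.X * dt f = PowerSeries.mk (fun k => (k : ℂ) * PowerSeries.coeff k f) := by
  ext k
  rcases k with _ | k
  · simp [PowerSeries.coeff_zero_eq_constantCoeff, PowerSeries.coeff_mk]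
  · rw [PowerSeries.coeff_succ_X_mul, coeff_dt, PowerSeries.coeff_mk]
    push_cast; ring

lemma X_dt_X_pow (n : ℕ) :
    PowerSeries.X * dt (PowerSeries.X ^ n : PowerSeries ℂ)
      = PowerSeries.C (n : ℂ) * PowerSeries.X ^ n := by
  rw [X_dt_eq]
  ext k
  rw [PowerSeries.coeff_mk, PowerSeries.coeff_C_mul, PowerSeries.coeff_X_pow]
  by_cases hk : k = n
  · subst hk; simp
  · simp [hk]

/-! ### order lemmas -/

lemma order_nat_exists {f : PowerSeries ℂ} (hf : f ≠ 0) : ∃ d : ℕ, f.order = (d : ℕ∞) := by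
  have h := PowerSeries.order_finite_iff_ne_zero.2 hf
  cases hcase : f.order with
  | top => rw [hcase] at h; simp at h
  | coe d => exact ⟨d, rfl⟩

lemma order_C_mul {c : ℂ} (hc : c ≠ 0) (f : PowerSeries ℂ) :
    (PowerSeries.C c * f).order = f.order := by
  rw [PowerSeries.order_mul]
  have : (PowerSeries.C c).order = 0 := by
    rw [← PowerSeries.monomial_zero_eq_C_apply, PowerSeries.order_monomial_of_ne_zero 0 c hc]
    rfl
  rw [this, zero_add]

/-! ### semigroup facts -/

lemma semigroup_add_mem {g : ℕ} {v : ℕ → ℕ} {x y : ℕ}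
    (hx : x ∈ semigroupGen g v) (hy : y ∈ semigroupGen g v) : x + y ∈ semigroupGen g v := by
  obtain ⟨c, hc⟩ := hx
  obtain ⟨c', hc'⟩ := hy
  refine ⟨fun i => c i + c' i, ?_⟩
  rw [hc, hc', ← Finset.sum_add_distrib]
  apply Finset.sum_congr rfl
  intro i _
  ring

lemma semigroup_v_mem {g : ℕ} {v : ℕ → ℕ} {i : ℕ} (hi : i ≤ g) : v i ∈ semigroupGen g v := by
  refine ⟨fun t => if t = i then 1 else 0, ?_⟩
  rw [Finset.sum_eq_single i]
  · simp
  · intro t _ ht; simp [ht]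
  · intro habs; exact absurd (Finset.mem_range.2 (Nat.lt_succ_of_le hi)) habs

lemma semigroup_dvd_or_ge {g : ℕ} {v : ℕ → ℕ} (hg : 1 ≤ g)
    (hmono : ∀ i j, i < j → j ≤ g → v i < v j) {x : ℕ} (hx : x ∈ semigroupGen g v) :
    v 0 ∣ x ∨ v 1 ≤ x := by
  obtain ⟨c, hc⟩ := hx
  by_cases hall : ∀ i, 1 ≤ i → i ≤ g → c i = 0
  · left
    have : x = c 0 * v 0 := by
      rw [hc]
      rw [Finset.range_eq_Ico, ← Finset.sum_Ico_consecutive _ (Nat.zero_le 1) (by omega : 1 ≤ g+1)]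
      have h2 : ∑ i ∈ Finset.Ico 1 (g+1), c i * v i = 0 := by
        apply Finset.sum_eq_zero
        intro i hi
        have := Finset.mem_Ico.1 hi
        rw [hall i this.1 (by omega)]
        ring
      rw [h2, add_zero]
      simp
    exact ⟨c 0, by rw [this, Nat.mul_comm]⟩
  · right
    push_neg at hall
    obtain ⟨i, hi1, hig, hci⟩ := hall
    have h1 : v 1 ≤ v i := by
      rcases Nat.lt_or_ge 1 i with h | h
      · exact le_of_lt (hmono 1 i h hig)
      · have : i = 1 := by omega
        rw [this]
    have h2 : v i ≤ c i * v i := Nat.le_mul_of_pos_left _ (by omega)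
    have h3 : c i * v i ≤ x := by
      rw [hc]
      apply Finset.single_le_sum (f := fun t => c t * v t)
      · intro t _; exact Nat.zero_le _
      · exact Finset.mem_range.2 (by omega)
    omega

lemma semigroup_pos_ge {g : ℕ} {v : ℕ → ℕ}
    (hmono : ∀ i j, i < j → j ≤ g → v i < v j) {x : ℕ} (hx : x ∈ semigroupGen g v)
    (hxpos : x ≠ 0) : v 0 ≤ x := by
  obtain ⟨c, hc⟩ := hx
  have : ∃ i, i ≤ g ∧ c i ≠ 0 := by
    by_contra hcon
    push_neg at hcon
    apply hxpos
    rw [hc]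
    apply Finset.sum_eq_zero
    intro i hi
    have hig : i ≤ g := Nat.lt_succ_iff.1 (Finset.mem_range.1 hi)
    rw [hcon i hig, zero_mul]
  obtain ⟨i, hig, hci⟩ := this
  have h1 : v 0 ≤ v i := by
    rcases Nat.lt_or_ge 0 i with h | h
    · exact le_of_lt (hmono 0 i h hig)
    · have : i = 0 := by omega
      rw [this]
  have h2 : v i ≤ c i * v i := Nat.le_mul_of_pos_left _ (by omega)
  have h3 : c i * v i ≤ x := by
    rw [hc]
    apply Finset.single_le_sum (f := fun t => c t * v t)
    · intro t _; exact Nat.zero_le _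
    · exact Finset.mem_range.2 (by omega)
  omega

end

end Aux4

section Aux5

open Finset

noncomputable section

lemma PlaneBranch.haX (C : PlaneBranch) :
    PowerSeries.constantCoeff (R := ℂ) (PowerSeries.X ^ C.n) = 0 := by
  have h1n := C.one_le_n
  rw [map_pow, PowerSeries.constantCoeff_X, zero_pow (by omega : C.n ≠ 0)]

lemma PlaneBranch.hy0 (C : PlaneBranch) : PowerSeries.constantCoeff C.y = 0 := by
  by_contra hc
  rw [← PowerSeries.coeff_zero_eq_constantCoeff] at hc
  have := C.coeff_vanish 0 hc
  have h1n := C.one_le_n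
  omega

lemma PlaneBranch.pull_def (C : PlaneBranch) (h : MvPowerSeries (Fin 2) ℂ) :
    C.pull h = subst2 (PowerSeries.X ^ C.n) C.y h := rfl

lemma PlaneBranch.pull_X0 (C : PlaneBranch) :
    C.pull (MvPowerSeries.X 0) = PowerSeries.X ^ C.n :=
  subst2_X0 C.haX

lemma PlaneBranch.pull_X1 (C : PlaneBranch) :
    C.pull (MvPowerSeries.X 1) = C.y :=
  subst2_X1 C.hy0

lemma PlaneBranch.order_y_ge (C : PlaneBranch) : (C.n : ℕ∞) ≤ C.y.order := by
  apply PowerSeries.nat_le_order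
  intro i hi
  by_contra hc
  have := C.coeff_vanish i hc
  omega

lemma PlaneBranch.n_mem_Gamma (C : PlaneBranch) : C.n ∈ C.Gamma := by
  refine ⟨MvPowerSeries.X 0, ?_, ?_⟩
  · rw [C.pull_X0]
    exact pow_ne_zero _ PowerSeries.X_ne_zero
  · rw [C.pull_X0, PowerSeries.order_X_pow]

lemma le_order_pow_of_le {f : PowerSeries ℂ} {c : ℕ} (hf : (c : ℕ∞) ≤ f.order)
    (i : ℕ) (hi : 1 ≤ i) : (c : ℕ∞) ≤ (f ^ i).order := by
  have hfi : f ^ i = f * f ^ (i - 1) := by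
    rw [← pow_succ']
    congr 1
    omega
  rw [hfi]
  exact le_trans hf (le_trans le_self_add (PowerSeries.le_order_mul _ _))

/-- pull of anything has order either 0 or at least n. -/
lemma PlaneBranch.pull_order_low (C : PlaneBranch) {h : MvPowerSeries (Fin 2) ℂ}
    {d : ℕ} (hord : (C.pull h).order = (d : ℕ∞)) (hd : d ≠ 0) : C.n ≤ d := by
  by_contra hc
  push_neg at hc
  -- coeff d (pull h) ≠ 0 but we show it's 0
  have hcoeff : PowerSeries.coeff d (C.pull h) ≠ 0 := (PowerSeries.order_eq_nat.1 hord).1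
  apply hcoeff
  rw [C.pull_def, coeff_subst2]
  apply Finset.sum_eq_zero
  intro i _
  apply Finset.sum_eq_zero
  intro j _
  by_cases hij : i = 0 ∧ j = 0
  · obtain ⟨rfl, rfl⟩ := hij
    rw [pow_zero, pow_zero, one_mul, PowerSeries.coeff_one, if_neg hd, mul_zero]
  · have hij1 : 1 ≤ i + j := by omega
    have hlow : (C.n : ℕ∞) ≤ ((PowerSeries.X ^ C.n) ^ i * C.y ^ j).order := by
      rcases Nat.lt_or_ge 0 i with hi1 | hi0
      · have h1 : (C.n : ℕ∞) ≤ ((PowerSeries.X ^ C.n : PowerSeries ℂ) ^ i).order := by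
          apply le_order_pow_of_le _ i hi1
          rw [PowerSeries.order_X_pow]
        exact le_trans h1 (le_trans le_self_add (PowerSeries.le_order_mul _ _))
      · have hj1 : 1 ≤ j := by omega
        have h1 : (C.n : ℕ∞) ≤ (C.y ^ j).order := le_order_pow_of_le C.order_y_ge j hj1
        exact le_trans h1 (le_trans le_add_self (PowerSeries.le_order_mul _ _))
    rw [PowerSeries.coeff_of_lt_order d (lt_of_lt_of_le (by exact_mod_cast hc) hlow), mul_zero]

lemma v0_facts (C : PlaneBranch) (g : ℕ) (v : ℕ → ℕ)
    (hmin : IsMinGen C.Gamma g v) (hg : 1 ≤ g) : v 0 = C.n ∧ 2 ≤ C.n := by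
  obtain ⟨hmono, hΓ, hminimal⟩ := hmin
  have hv0ne : v 0 ≠ 0 := by
    intro hc
    exact hminimal 0 (Nat.zero_le g) (fun _ => 0) rfl (by simpa using hc)
  have hnΓ : C.n ∈ semigroupGen g v := hΓ ▸ C.n_mem_Gamma
  have h1n := C.one_le_n
  have hv0len : v 0 ≤ C.n := semigroup_pos_ge hmono hnΓ (by omega)
  have hv0Γ : v 0 ∈ C.Gamma := hΓ ▸ semigroup_v_mem (Nat.zero_le g)
  obtain ⟨h, hne0, hord⟩ := hv0Γ
  have hnle : C.n ≤ v 0 := C.pull_order_low hord hv0ne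
  have hv0n : v 0 = C.n := by omega
  refine ⟨hv0n, ?_⟩
  by_contra hc
  push_neg at hc
  have hn1 : C.n = 1 := by
    have := C.one_le_n
    omega
  apply hminimal 1 hg (fun i => if i = 0 then v 1 else 0) (by simp)
  rw [Finset.sum_eq_single 0]
  · simp [hv0n, hn1]
  · intro t _ ht; simp [ht]
  · intro habs; exact absurd (Finset.mem_range.2 (by omega)) habs

/-- The main numerical argument, assuming `n ∤ ord y`. -/
lemma main_aux (C : PlaneBranch) (g : ℕ) (v : ℕ → ℕ)
    (hmin : IsMinGen C.Gamma g v) (hg : 1 ≤ g)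
    (hne : (C.Lambda \ C.Gamma).Nonempty)
    (m : ℕ) (hm : C.y.order = (m : ℕ∞)) (hnd : ¬ C.n ∣ m) :
    v 0 + v 1 < sInf (C.Lambda \ C.Gamma) := by
  obtain ⟨hv0n, hn2⟩ := v0_facts C g v hmin hg
  obtain ⟨hmono, hΓ, hminimal⟩ := hmin
  have hΓadd : ∀ {x x' : ℕ}, x ∈ C.Gamma → x' ∈ C.Gamma → x + x' ∈ C.Gamma := by
    intro x x' hx hx'
    rw [hΓ] at hx hx' ⊢
    exact semigroup_add_mem hx hx'
  set lam := sInf (C.Lambda \ C.Gamma) with hlam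
  have hlammem := Nat.sInf_mem hne
  rw [← hlam] at hlammem
  obtain ⟨hlamΛ, hlamΓ⟩ := hlammem
  obtain ⟨A, B, hW, hord⟩ := hlamΛ
  -- basic facts about y and z
  have hyne : C.y ≠ 0 := by
    intro h0
    rw [h0, PowerSeries.order_zero] at hm
    exact (by simp : ((⊤:ℕ∞) ≠ (m:ℕ∞))) hm
  have hmn : C.n ≤ m := by
    have := C.order_y_ge
    rw [hm] at this
    exact_mod_cast this
  have hymne : PowerSeries.coeff m C.y ≠ 0 := (PowerSeries.order_eq_nat.1 hm).1
  set z := PowerSeries.X * dt C.y with hz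
  have hzord : z.order = (m : ℕ∞) := by
    rw [hz, X_dt_eq, PowerSeries.order_eq_nat]
    constructor
    · rw [PowerSeries.coeff_mk]
      exact mul_ne_zero (Nat.cast_ne_zero.2 (by omega)) hymne
    · intro i hi
      rw [PowerSeries.coeff_mk,
        PowerSeries.coeff_of_lt_order i (by rw [hm]; exact_mod_cast hi), mul_zero]
  set S1 := C.pull A * (PowerSeries.C (C.n : ℂ) * PowerSeries.X ^ C.n) with hS1
  set S2 := C.pull B * z with hS2
  have hdecomp : PowerSeries.X * C.pullForm A B = S1 + S2 := by
    have : PowerSeries.X * C.pullForm A B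
        = C.pull A * (PowerSeries.X * dt (PowerSeries.X ^ C.n))
          + C.pull B * (PowerSeries.X * dt C.y) := by
      rw [PlaneBranch.pullForm]; ring
    rw [this, X_dt_X_pow, hS1, hS2, hz]
  rw [hdecomp] at hord
  have hnc : (C.n : ℂ) ≠ 0 := Nat.cast_ne_zero.2 (by omega)
  have hnΓ : C.n ∈ C.Gamma := C.n_mem_Gamma
  have hmΓ : m ∈ C.Gamma := ⟨MvPowerSeries.X 1, by rw [C.pull_X1]; exact hyne,
    by rw [C.pull_X1]; exact hm⟩
  by_cases hA : C.pull A = 0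
  · exfalso
    have hB : C.pull B ≠ 0 := by
      intro hB0
      apply hW
      rw [PlaneBranch.pullForm, hA, hB0, zero_mul, zero_mul, add_zero]
    obtain ⟨β, hβ⟩ := order_nat_exists hB
    have : ((β + m : ℕ) : ℕ∞) = (lam : ℕ∞) := by
      rw [← hord, hS1, hA, zero_mul, zero_add, hS2, PowerSeries.order_mul, hβ, hzord]
      push_cast; ring
    have hlameq : lam = β + m := by exact_mod_cast this.symm
    exact hlamΓ (hlameq ▸ hΓadd ⟨B, hB, hβ⟩ hmΓ)
  · by_cases hB : C.pull B = 0
    · exfalso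
      obtain ⟨α, hα⟩ := order_nat_exists hA
      have : ((α + C.n : ℕ) : ℕ∞) = (lam : ℕ∞) := by
        rw [← hord, hS2, hB, zero_mul, add_zero, hS1, PowerSeries.order_mul,
          order_C_mul hnc, PowerSeries.order_X_pow, hα]
        push_cast; ring
      have hlameq : lam = α + C.n := by exact_mod_cast this.symm
      exact hlamΓ (hlameq ▸ hΓadd ⟨A, hA, hα⟩ hnΓ)
    · obtain ⟨α, hα⟩ := order_nat_exists hA
      obtain ⟨β, hβ⟩ := order_nat_exists hB
      have hαΓ : α ∈ C.Gamma := ⟨A, hA, hα⟩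
      have hβΓ : β ∈ C.Gamma := ⟨B, hB, hβ⟩
      have hordS1 : S1.order = ((α + C.n : ℕ) : ℕ∞) := by
        rw [hS1, PowerSeries.order_mul, order_C_mul hnc, PowerSeries.order_X_pow, hα]
        push_cast; ring
      have hordS2 : S2.order = ((β + m : ℕ) : ℕ∞) := by
        rw [hS2, PowerSeries.order_mul, hβ, hzord]
        push_cast; ring
      by_cases heq : α + C.n = β + m
      · -- orders coincide; lam > α + n
        have hlow : ((α + C.n : ℕ) : ℕ∞) ≤ (S1 + S2).order := by
          refine le_trans ?_ (PowerSeries.min_order_le_order_add S1 S2)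
          rw [hordS1, hordS2, ← heq, min_self]
        rw [hord] at hlow
        have hle : α + C.n ≤ lam := by exact_mod_cast hlow
        have hne' : lam ≠ α + C.n := by
          intro hcontra
          exact hlamΓ (hcontra ▸ hΓadd hαΓ hnΓ)
        have hlt : α + C.n < lam := lt_of_le_of_ne hle (fun hcc => hne' hcc.symm)
        -- v 1 ≤ m
        have hv1m : v 1 ≤ m := by
          rcases semigroup_dvd_or_ge hg hmono (hΓ ▸ hmΓ) with hdvd | hge
          · rw [hv0n] at hdvd
            exact absurd hdvd hnd
          · exact hge
        have hv1α : v 1 ≤ α := by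
          by_contra hcon
          push_neg at hcon
          rcases semigroup_dvd_or_ge hg hmono (hΓ ▸ hαΓ) with hdvd | hge
          · -- n ∣ α; show β = 0 and derive n ∣ m
            have hβn : β < C.n := by omega
            have hβ0 : β = 0 := by
              by_contra hβne
              have := semigroup_pos_ge hmono (hΓ ▸ hβΓ) hβne
              omega
            apply hnd
            rw [hv0n] at hdvd
            obtain ⟨t, ht⟩ := hdvd
            refine ⟨t + 1, ?_⟩
            rw [Nat.mul_add, Nat.mul_one, ← ht]
            omega
          · omega
        omega
      · -- orders differ: lam = min ∈ Γ
        exfalso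
        have hmin' : (S1 + S2).order = min S1.order S2.order :=
          PowerSeries.order_add_of_order_ne S1 S2 (by
            rw [hordS1, hordS2]
            intro hcc
            exact heq (by exact_mod_cast hcc))
        rw [hord, hordS1, hordS2] at hmin'
        apply hlamΓ
        rcases le_total (α + C.n) (β + m) with hle | hle
        · have : (lam : ℕ∞) = ((α + C.n : ℕ) : ℕ∞) := by
            rw [hmin', min_eq_left (by exact_mod_cast hle)]
          have hlameq : lam = α + C.n := by exact_mod_cast this
          rw [hlameq]
          exact hΓadd hαΓ hnΓ
        · have : (lam : ℕ∞) = ((β + m : ℕ) : ℕ∞) := by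
            rw [hmin', min_eq_right (by exact_mod_cast hle)]
          have hlameq : lam = β + m := by exact_mod_cast this
          rw [hlameq]
          exact hΓadd hβΓ hmΓ

end

end Aux5

section Aux6

open Finset

noncomputable section

lemma PlaneBranch.pull_add (C : PlaneBranch) (h h' : MvPowerSeries (Fin 2) ℂ) :
    C.pull (h + h') = C.pull h + C.pull h' := subst2_add _ _ _ _

lemma PlaneBranch.pull_sub (C : PlaneBranch) (h h' : MvPowerSeries (Fin 2) ℂ) :
    C.pull (h - h') = C.pull h - C.pull h' := subst2_sub _ _ _ _

lemma PlaneBranch.pull_mul (C : PlaneBranch) (h h' : MvPowerSeries (Fin 2) ℂ) :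
    C.pull (h * h') = C.pull h * C.pull h' := subst2_mul C.haX C.hy0 _ _

/-- Coordinate change: any branch with `n ≥ 2` is equivalent (same `Γ`, same `Λ`)
to a branch whose `y` has order not divisible by `n`. -/
lemma exists_good_branch (C : PlaneBranch) (hn2 : 2 ≤ C.n) :
    ∃ (C' : PlaneBranch) (m : ℕ), C'.Gamma = C.Gamma ∧ C'.Lambda = C.Lambda ∧
      C'.y.order = (m : ℕ∞) ∧ ¬ C'.n ∣ m := by
  classical
  have h1n := C.one_le_n
  have hy0 := C.hy0
  have haX := C.haX
  -- the first exponent of y not divisible by n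
  have hex : ∃ i, PowerSeries.coeff i C.y ≠ 0 ∧ ¬ C.n ∣ i := by
    by_contra hc
    push_neg at hc
    have := C.primitive C.n dvd_rfl hc
    omega
  set i₀ := Nat.find hex with hi₀def
  obtain ⟨hyi₀, hndvd⟩ := Nat.find_spec hex
  have hminlt : ∀ k, k < i₀ → PowerSeries.coeff k C.y ≠ 0 → C.n ∣ k := by
    intro k hk hkc
    by_contra hknd
    exact Nat.find_min hex hk ⟨hkc, hknd⟩
  set S := (Finset.range i₀).filter (fun k => PowerSeries.coeff k C.y ≠ 0) with hSdef
  have hSmem : ∀ k ∈ S, PowerSeries.coeff k C.y ≠ 0 ∧ k < i₀ ∧ C.n ∣ k ∧ C.n ≤ k := by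
    intro k hk
    rw [hSdef, Finset.mem_filter, Finset.mem_range] at hk
    exact ⟨hk.2, hk.1, hminlt k hk.1 hk.2, C.coeff_vanish k hk.2⟩
  set p := ∑ k ∈ S, PowerSeries.C (PowerSeries.coeff k C.y) * PowerSeries.X ^ k with hpdef
  have hpcoeff : ∀ i, PowerSeries.coeff i p =
      if i < i₀ then PowerSeries.coeff i C.y else 0 := by
    intro i
    have h1 : PowerSeries.coeff i p = if i ∈ S then PowerSeries.coeff i C.y else 0 := by
      rw [hpdef, map_sum]
      have h2 : ∀ k ∈ S, PowerSeries.coeff i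
          (PowerSeries.C (PowerSeries.coeff k C.y) * PowerSeries.X ^ k)
          = if k = i then PowerSeries.coeff k C.y else 0 := by
        intro k _
        rw [PowerSeries.coeff_C_mul, PowerSeries.coeff_X_pow]
        by_cases hki : i = k
        · subst hki
          rw [if_pos rfl, if_pos rfl, mul_one]
        · rw [if_neg hki, if_neg (fun hc => hki hc.symm), mul_zero]
      rw [Finset.sum_congr rfl h2, Finset.sum_ite_eq' S i (fun k => PowerSeries.coeff k C.y)]
    rw [h1]
    by_cases hii : i < i₀
    · by_cases hyi : PowerSeries.coeff i C.y = 0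
      · rw [if_pos hii]
        split_ifs with hmem
        · rfl
        · exact hyi.symm
      · rw [if_pos (by rw [hSdef, Finset.mem_filter, Finset.mem_range]; exact ⟨hii, hyi⟩),
          if_pos hii]
    · rw [if_neg hii, if_neg (fun hmem => hii (Finset.mem_range.1
        ((Finset.mem_filter.1 (hSdef ▸ hmem)).1)))]
  set yt := C.y - p with hytdef
  have hytcoeff : ∀ i, PowerSeries.coeff i yt =
      if i < i₀ then 0 else PowerSeries.coeff i C.y := by
    intro i
    rw [hytdef, map_sub, hpcoeff]
    split_ifs with h
    · ring
    · ring
  -- the new branch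
  have hvanish : ∀ i, PowerSeries.coeff i yt ≠ 0 → C.n ≤ i := by
    intro i hi
    rw [hytcoeff] at hi
    split_ifs at hi with h
    · exact absurd rfl hi
    · exact C.coeff_vanish i hi
  have hprim : ∀ d : ℕ, d ∣ C.n → (∀ i, PowerSeries.coeff i yt ≠ 0 → d ∣ i) → d = 1 := by
    intro d hd hall
    apply C.primitive d hd
    intro i hi
    by_cases hii : i < i₀
    · exact dvd_trans hd (hminlt i hii hi)
    · apply hall i
      rw [hytcoeff, if_neg hii]
      exact hi
  set C' : PlaneBranch := ⟨C.n, yt, C.one_le_n, hvanish, hprim⟩ with hC'def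
  have hC'n : C'.n = C.n := rfl
  have hC'y : C'.y = yt := rfl
  have hyt0 : PowerSeries.constantCoeff yt = 0 := C'.hy0
  have hytord : yt.order = (i₀ : ℕ∞) := by
    rw [PowerSeries.order_eq_nat]
    constructor
    · rw [hytcoeff, if_neg (lt_irrefl i₀)]
      exact hyi₀
    · intro i hi
      rw [hytcoeff, if_pos hi]
  -- the substitution series
  set Qm : MvPowerSeries (Fin 2) ℂ := ∑ k ∈ S,
    MvPowerSeries.C (PowerSeries.coeff k C.y) * (MvPowerSeries.X 0) ^ (k / C.n)
    with hQmdef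
  have hQm0 : MvPowerSeries.constantCoeff Qm = 0 := by
    rw [hQmdef, map_sum]
    apply Finset.sum_eq_zero
    intro k hk
    obtain ⟨-, -, -, hkn⟩ := hSmem k hk
    have hdiv : 1 ≤ k / C.n := (Nat.one_le_div_iff (by omega)).2 hkn
    rw [map_mul, map_pow, MvPowerSeries.constantCoeff_X, zero_pow (by omega), mul_zero]
  have hsubQm : ∀ b : PowerSeries ℂ, PowerSeries.constantCoeff b = 0 →
      subst2 (PowerSeries.X ^ C.n) b Qm = p := by
    intro b hb
    rw [hQmdef, subst2_sum, hpdef]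
    apply Finset.sum_congr rfl
    intro k hk
    obtain ⟨-, -, hkdvd, -⟩ := hSmem k hk
    rw [subst2_mul haX hb, subst2_C, subst2_pow haX hb, subst2_X0 haX, ← pow_mul,
      Nat.mul_div_cancel' hkdvd]
  -- pull transfer
  have keyM : ∀ h, C.pull (msubst (MvPowerSeries.X 0) (MvPowerSeries.X 1 - Qm) h)
      = C'.pull h := by
    intro h
    rw [PlaneBranch.pull_def, subst2_msubst haX hy0 (MvPowerSeries.constantCoeff_X 0)
      (by rw [map_sub, MvPowerSeries.constantCoeff_X, hQm0, sub_zero]),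
      subst2_X0 haX, subst2_sub, subst2_X1 hy0, hsubQm C.y hy0]
    rfl
  have keyP : ∀ h, C'.pull (msubst (MvPowerSeries.X 0) (MvPowerSeries.X 1 + Qm) h)
      = C.pull h := by
    intro h
    have h1 : C'.pull (msubst (MvPowerSeries.X 0) (MvPowerSeries.X 1 + Qm) h)
        = subst2 (PowerSeries.X ^ C.n) (yt + p) h := by
      rw [PlaneBranch.pull_def, hC'n, hC'y,
        subst2_msubst haX hyt0 (MvPowerSeries.constantCoeff_X 0)
          (by rw [map_add, MvPowerSeries.constantCoeff_X, hQm0, add_zero]),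
        subst2_X0 haX, subst2_add, subst2_X1 hyt0, hsubQm yt hyt0]
    rw [h1]
    have h2 : yt + p = C.y := by rw [hytdef]; ring
    rw [h2, PlaneBranch.pull_def]
  -- Gamma equality
  have hGam : C'.Gamma = C.Gamma := by
    ext d
    constructor
    · rintro ⟨h, h1, h2⟩
      exact ⟨msubst (MvPowerSeries.X 0) (MvPowerSeries.X 1 - Qm) h,
        by rw [keyM]; exact h1, by rw [keyM]; exact h2⟩
    · rintro ⟨h, h1, h2⟩
      exact ⟨msubst (MvPowerSeries.X 0) (MvPowerSeries.X 1 + Qm) h,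
        by rw [keyP]; exact h1, by rw [keyP]; exact h2⟩
  -- derivative of p
  set E := ∑ k ∈ S, PowerSeries.C (PowerSeries.coeff k C.y * (k / C.n : ℕ))
    * PowerSeries.X ^ (C.n * (k / C.n - 1)) with hEdef
  set D : MvPowerSeries (Fin 2) ℂ := ∑ k ∈ S,
    MvPowerSeries.C (PowerSeries.coeff k C.y * (k / C.n : ℕ))
    * (MvPowerSeries.X 0) ^ (k / C.n - 1) with hDdef
  have hsubD : ∀ b : PowerSeries ℂ, PowerSeries.constantCoeff b = 0 →
      subst2 (PowerSeries.X ^ C.n) b D = E := by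
    intro b hb
    rw [hDdef, subst2_sum, hEdef]
    apply Finset.sum_congr rfl
    intro k hk
    rw [subst2_mul haX hb, subst2_C, subst2_pow haX hb, subst2_X0 haX, ← pow_mul]
  have hEdt : E * dt (PowerSeries.X ^ C.n) = dt p := by
    rw [hpdef, dt_sum, hEdef, Finset.sum_mul]
    apply Finset.sum_congr rfl
    intro k hk
    obtain ⟨-, -, hkdvd, hkn⟩ := hSmem k hk
    obtain ⟨c, hc⟩ := hkdvd
    have hcpos : 1 ≤ c := by
      by_contra hcc
      push_neg at hcc
      have hc0 : c = 0 := by omega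
      rw [hc0, Nat.mul_zero] at hc
      omega
    have hkc : k / C.n = c := by
      rw [hc, Nat.mul_div_cancel_left c (by omega : 0 < C.n)]
    rw [dt_C_mul_X_pow _ k (by omega), dt_X_pow C.n (by omega), hkc]
    rw [mul_mul_mul_comm, ← map_mul, ← pow_add]
    congr 2
    · rw [mul_assoc]
      congr 1
      rw [← Nat.cast_mul]
      congr 1
      rw [hc, Nat.mul_comm]
    · rw [hc]
      obtain ⟨c', rfl⟩ : ∃ c', c = c' + 1 := ⟨c - 1, by omega⟩
      rw [Nat.add_sub_cancel, Nat.mul_succ]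
      omega
  have hdty : dt C.y = dt yt + dt p := by
    have h0 : C.y = yt + p := by rw [hytdef]; ring
    rw [h0, dt_add]
  have hpD : C.pull D = E := hsubD C.y hy0
  have hpD' : C'.pull D = E := hsubD yt hyt0
  -- Lambda equality via the form transformation
  have hform₁ : ∀ A B, C.pullForm
      (msubst (MvPowerSeries.X 0) (MvPowerSeries.X 1 - Qm) A
        - msubst (MvPowerSeries.X 0) (MvPowerSeries.X 1 - Qm) B * D)
      (msubst (MvPowerSeries.X 0) (MvPowerSeries.X 1 - Qm) B) = C'.pullForm A B := by
    intro A B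
    rw [PlaneBranch.pullForm, PlaneBranch.pullForm, hC'n, hC'y]
    rw [C.pull_sub, C.pull_mul, hpD, keyM, keyM, hdty]
    linear_combination (- C'.pull B) * hEdt
  have hform₂ : ∀ A B, C'.pullForm
      (msubst (MvPowerSeries.X 0) (MvPowerSeries.X 1 + Qm) A
        + msubst (MvPowerSeries.X 0) (MvPowerSeries.X 1 + Qm) B * D)
      (msubst (MvPowerSeries.X 0) (MvPowerSeries.X 1 + Qm) B) = C.pullForm A B := by
    intro A B
    rw [PlaneBranch.pullForm, PlaneBranch.pullForm, hC'n, hC'y]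
    rw [C'.pull_add, C'.pull_mul, hpD', keyP, keyP, hdty]
    linear_combination (C.pull B) * hEdt
  have hLam : C'.Lambda = C.Lambda := by
    ext d
    constructor
    · rintro ⟨A, B, h1, h2⟩
      refine ⟨msubst (MvPowerSeries.X 0) (MvPowerSeries.X 1 - Qm) A
        - msubst (MvPowerSeries.X 0) (MvPowerSeries.X 1 - Qm) B * D,
        msubst (MvPowerSeries.X 0) (MvPowerSeries.X 1 - Qm) B, ?_, ?_⟩
      · rw [hform₁]; exact h1
      · rw [hform₁]; exact h2
    · rintro ⟨A, B, h1, h2⟩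
      refine ⟨msubst (MvPowerSeries.X 0) (MvPowerSeries.X 1 + Qm) A
        + msubst (MvPowerSeries.X 0) (MvPowerSeries.X 1 + Qm) B * D,
        msubst (MvPowerSeries.X 0) (MvPowerSeries.X 1 + Qm) B, ?_, ?_⟩
      · rw [hform₂]; exact h1
      · rw [hform₂]; exact h2
  exact ⟨C', i₀, hGam, hLam, hytord, hndvd⟩

end

end Aux6


/-- For a plane branch `C` with minimal generators `v_0 < ⋯ < v_g` (`g ≥ 1`) of
`Γ_C`, if `Λ_C \ Γ_C ≠ ∅` then `min(Λ_C \ Γ_C) > v_0 + v_1`. -/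
theorem min_lambda_diff_gamma_gt (C : PlaneBranch) (g : ℕ) (v : ℕ → ℕ)
    (hmin : IsMinGen C.Gamma g v) (hg : 1 ≤ g)
    (hne : (C.Lambda \ C.Gamma).Nonempty) :
    v 0 + v 1 < sInf (C.Lambda \ C.Gamma) := by
  obtain ⟨hv0n, hn2⟩ := v0_facts C g v hmin hg
  obtain ⟨C', m, hGam, hLam, hord, hnd⟩ := exists_good_branch C hn2
  have hmin' : IsMinGen C'.Gamma g v := by rw [hGam]; exact hmin
  have hne' : (C'.Lambda \ C'.Gamma).Nonempty := by rw [hGam, hLam]; exact hne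
  have hres := main_aux C' g v hmin' hg hne' m hord hnd
  rwa [hGam, hLam] at hres
end
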